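/- arXiv:math/0510206 — 3 statements merged into one kernel-verified Lean document; each statement's English description precedes it below -/
import Mathlib

section
/- Let n ≥ 1, s ∈ ℝ, α ≥ 0, and C ∈ (0,∞). Let k, l : [0,∞) → (0,∞) be regularly varying with index α and satisfy lim_{t→∞} l(t)/k(t) = C. Let v : [0,∞) → {measurable functions ℝⁿ → ℂ} and let W : ℝⁿ → ℂ be measurable with ∫_{ℝⁿ}(1+|ξ|²)^s |W(ξ)|² dξ < ∞. Assume that for all 0 < c < d < ∞, sup_{τ∈[c,d]} ∫_{ℝⁿ}(1+|ξ|²)^s |v(Tτ)(ξ/k(T)) − W(τ^α ξ)|² dξ → 0 as T → ∞. Then for all 0 < c < d < ∞, sup_{τ∈[c,d]} ∫_{ℝⁿ}(1+|ξ|²)^s |v(Tτ)(ξ/l(T)) − W(τ^α ξ / C)|² dξ → 0 as T → ∞. -/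
open MeasureTheory Set Filter
open scoped ENNReal NNReal

lemma lint_smul (n : ℕ) (g : EuclideanSpace ℝ (Fin n) → ℝ≥0∞) (hg : Measurable g) {R : ℝ} (hR : 0 < R) :
    ∫⁻ x, g (R • x) = ENNReal.ofReal ((R ^ n)⁻¹) * ∫⁻ x, g x := by
  have h := Measure.map_addHaar_smul (volume : Measure (EuclideanSpace ℝ (Fin n))) (ne_of_gt hR)
  rw [← lintegral_map hg (measurable_const_smul R), h, lintegral_smul_measure,
    finrank_euclideanSpace_fin, abs_of_pos (by positivity), smul_eq_mul]


lemma lint_smul' (n : ℕ) (g : EuclideanSpace ℝ (Fin n) → ℝ≥0∞) (hg : Measurable g) {R : ℝ} (hR : 0 < R) :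
    ∫⁻ x, g x = ENNReal.ofReal (R ^ n) * ∫⁻ x, g (R • x) := by
  rw [lint_smul n g hg hR, ← mul_assoc, ← ENNReal.ofReal_mul (by positivity),
    mul_inv_cancel₀ (by positivity), ENNReal.ofReal_one, one_mul]

lemma rpow_ratio (e : ℝ) {u v M : ℝ} (hu : 0 < u) (hv : 0 < v) (hM : 1 ≤ M)
    (h1 : u ≤ M * v) (h2 : v ≤ M * u) : u ^ e ≤ M ^ |e| * v ^ e := by
  have hM0 : (0:ℝ) < M := lt_of_lt_of_le one_pos hM
  have key : ∀ w z : ℝ, 0 < w → 0 < z → w ≤ M * z → ∀ f : ℝ, 0 ≤ f → w ^ f ≤ M ^ f * z ^ f := by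
    intro w z hw hz hwz f hf
    calc w ^ f ≤ (M * z) ^ f := Real.rpow_le_rpow hw.le hwz hf
      _ = M ^ f * z ^ f := Real.mul_rpow hM0.le hz.le
  rcases le_or_gt 0 e with he | he
  · rw [abs_of_nonneg he]; exact key u v hu hv h1 e he
  · rw [abs_of_neg he]
    have k := key v u hv hu h2 (-e) (by linarith)
    have hrw : ∀ w : ℝ, 0 < w → w ^ e = (w ^ (-e))⁻¹ := by
      intro w hw
      rw [← Real.rpow_neg hw.le, neg_neg]
    have hA : 0 < u ^ (-e) := Real.rpow_pos_of_pos hu _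
    have hB : 0 < v ^ (-e) := Real.rpow_pos_of_pos hv _
    rw [hrw u hu, hrw v hv]
    calc (u ^ (-e))⁻¹ = (u^(-e))⁻¹ * (v^(-e))⁻¹ * (v^(-e)) := by field_simp
      _ ≤ (u^(-e))⁻¹ * (v^(-e))⁻¹ * (M^(-e) * u^(-e)) := by gcongr
      _ = M^(-e) * (v^(-e))⁻¹ * ((u^(-e))⁻¹ * u^(-e)) := by ring
      _ = M^(-e) * (v^(-e))⁻¹ := by rw [inv_mul_cancel₀ (ne_of_gt hA), mul_one]

lemma abs_rpow_sub_le (e : ℝ) {u v M : ℝ} (hu : 0 < u) (hv : 0 < v) (hM : 1 ≤ M)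
    (h1 : u ≤ M * v) (h2 : v ≤ M * u) : |u ^ e - v ^ e| ≤ (M ^ |e| - 1) * v ^ e := by
  have hb1 := rpow_ratio e hu hv hM h1 h2
  have hb2 := rpow_ratio e hv hu hM h2 h1
  have hMe : 1 ≤ M ^ |e| := Real.one_le_rpow hM (abs_nonneg e)
  have hue : 0 < u ^ e := Real.rpow_pos_of_pos hu _
  have hve : 0 < v ^ e := Real.rpow_pos_of_pos hv _
  rw [abs_sub_le_iff]
  constructor
  · nlinarith
  · nlinarith [sq_nonneg (M ^ |e| - 1), mul_pos hue hve]


-- weight comparison: (1+‖a•ξ‖²)^s ≤ (1+A₁²+A₂²)^|s| (1+‖ξ‖²)^s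
lemma weight_cmp (s : ℝ) {a A₁ A₂ : ℝ} (ha : 0 < a) (hA1 : a ≤ A₁) (hA2 : a⁻¹ ≤ A₂)
    {t : ℝ} (ht : 0 ≤ t) :
    (1 + a^2*t) ^ s ≤ (1 + A₁^2 + A₂^2) ^ |s| * (1 + t) ^ s := by
  have ha2 : (0:ℝ) < a⁻¹ := by positivity
  have hA2' : 1 ≤ a * A₂ := by
    calc (1:ℝ) = a * a⁻¹ := by field_simp
      _ ≤ a * A₂ := by gcongr
  have haA : a^2 ≤ A₁^2 := by nlinarith
  have h2 : 1 ≤ (a*A₂)^2 := by nlinarith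
  refine rpow_ratio s (by positivity) (by positivity) (by nlinarith [sq_nonneg A₁, sq_nonneg A₂]) ?_ ?_
  · nlinarith [mul_le_mul_of_nonneg_right haA ht, sq_nonneg A₂, mul_nonneg (sq_nonneg A₂) ht, mul_nonneg (sq_nonneg A₁) ht]
  · nlinarith [mul_le_mul_of_nonneg_right h2 ht, sq_nonneg A₁, mul_nonneg (mul_nonneg (sq_nonneg A₁) (sq_nonneg a)) ht, mul_nonneg (sq_nonneg a) ht]

-- ENNReal weight version
lemma weight_cmp' (n : ℕ) (s : ℝ) {a A₁ A₂ : ℝ} (ha : 0 < a) (hA1 : a ≤ A₁) (hA2 : a⁻¹ ≤ A₂)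
    (ξ : EuclideanSpace ℝ (Fin n)) :
    ENNReal.ofReal ((1 + ‖a • ξ‖^2) ^ s)
      ≤ ENNReal.ofReal ((1 + A₁^2 + A₂^2) ^ |s|) * ENNReal.ofReal ((1 + ‖ξ‖^2) ^ s) := by
  rw [← ENNReal.ofReal_mul (by positivity)]
  apply ENNReal.ofReal_le_ofReal
  have hn : ‖a • ξ‖^2 = a^2 * ‖ξ‖^2 := by
    rw [norm_smul, Real.norm_eq_abs, abs_of_pos ha, mul_pow]
  rw [hn]
  exact weight_cmp s ha hA1 hA2 (by positivity)

-- pointwise identity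
lemma pointwise_w (s t : ℝ) (ht : 0 ≤ t) (z : ℂ) :
    ENNReal.ofReal ((1 + t) ^ s) * (‖z‖₊ : ℝ≥0∞)^2
      = (‖(((1 + t) ^ (s/2) : ℝ) : ℂ) * z‖₊ : ℝ≥0∞)^2 := by
  have h1 : (0:ℝ) < 1 + t := by linarith
  have hfac : (0:ℝ) ≤ (1+t) ^ (s/2) := (Real.rpow_pos_of_pos h1 _).le
  rw [nnnorm_mul]
  push_cast
  rw [mul_pow]
  congr 1
  rw [Complex.nnnorm_real, ← enorm_eq_nnnorm, Real.enorm_eq_ofReal hfac, sq, ← ENNReal.ofReal_mul hfac,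
    ← Real.rpow_add h1]
  norm_num

lemma sqInt (n : ℕ) (f : EuclideanSpace ℝ (Fin n) → ℂ) :
    ∫⁻ ξ, (‖f ξ‖₊ : ℝ≥0∞)^2 = eLpNorm f 2 volume ^ 2 := by
  rw [eLpNorm_eq_lintegral_rpow_enorm_toReal (by norm_num) (by norm_num)]
  rw [← ENNReal.rpow_natCast _ 2, ← ENNReal.rpow_mul]
  norm_num
  simp only [enorm_eq_nnnorm]

lemma meas_weight (n : ℕ) (s : ℝ) :
    Continuous fun ξ : EuclideanSpace ℝ (Fin n) => ((1 + ‖ξ‖^2) ^ s : ℝ) := by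
  have h : Continuous fun ξ : EuclideanSpace ℝ (Fin n) => (1 + ‖ξ‖^2 : ℝ) := by
    continuity
  exact h.rpow_const fun ξ => Or.inl (by positivity)

lemma meas_int (n : ℕ) (s : ℝ) {f g : EuclideanSpace ℝ (Fin n) → ℂ}
    (hf : Measurable f) (hg : Measurable g) :
    Measurable fun ξ => ENNReal.ofReal ((1 + ‖ξ‖^2) ^ s) * (‖f ξ - g ξ‖₊ : ℝ≥0∞)^2 := by
  exact ((ENNReal.continuous_ofReal.comp (meas_weight n s)).measurable).mul
    (((hf.sub hg).nnnorm.coe_nnreal_ennreal).pow_const 2)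


lemma tri4 (x y z : ℂ) : (‖x - z‖₊:ℝ≥0∞)^2 ≤ 4*(‖x - y‖₊:ℝ≥0∞)^2+4*(‖y - z‖₊:ℝ≥0∞)^2 := by
  have h1 : (‖x - z‖₊:ℝ≥0∞) ≤ (‖x - y‖₊:ℝ≥0∞)+(‖y - z‖₊:ℝ≥0∞) := by
    have h : x - z = (x - y) + (y - z) := by ring
    rw [h]; exact_mod_cast nnnorm_add_le _ _
  calc (‖x - z‖₊:ℝ≥0∞)^2 ≤ ((‖x - y‖₊:ℝ≥0∞)+(‖y - z‖₊:ℝ≥0∞))^2 := by gcongr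
    _ ≤ _ := by
      rcases le_total ((‖x - y‖₊:ℝ≥0∞)) ((‖y - z‖₊:ℝ≥0∞)) with h | h
      · calc _ ≤ ((‖y - z‖₊:ℝ≥0∞)+(‖y - z‖₊:ℝ≥0∞))^2 := by gcongr
          _ = 4*(‖y - z‖₊:ℝ≥0∞)^2 := by ring
          _ ≤ _ := le_add_self
      · calc _ ≤ ((‖x - y‖₊:ℝ≥0∞)+(‖x - y‖₊:ℝ≥0∞))^2 := by gcongr
          _ = 4*(‖x - y‖₊:ℝ≥0∞)^2 := by ring
          _ ≤ _ := le_self_add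

lemma Hdil (n : ℕ) (F : EuclideanSpace ℝ (Fin n) → ℂ) (hF : Measurable F)
    (hF2 : MemLp F 2 (volume : Measure (EuclideanSpace ℝ (Fin n)))) :
    ∀ ε : ℝ, 0 < ε → ∀ᶠ β in nhdsWithin (1:ℝ) (Ioi 0),
      (∫⁻ ξ, (‖F ξ - F (β • ξ)‖₊ : ℝ≥0∞)^2) < ENNReal.ofReal ε := by
  intro ε hε
  set φ := nhdsWithin (1:ℝ) (Ioi 0) with hφ
  set K : ℝ := ε / (400 * 2^n) with hK
  have h2n : (1:ℝ) ≤ 2^n := one_le_pow₀ (by norm_num)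
  have hKpos : 0 < K := by positivity
  set η : ℝ := Real.sqrt K with hη
  have hηpos : 0 < η := Real.sqrt_pos.mpr hKpos
  obtain ⟨g, g_supp, g_close, g_cont, g_mem⟩ :=
    hF2.exists_hasCompactSupport_eLpNorm_sub_le (by norm_num)
      (ε := ENNReal.ofReal η) (ne_of_gt (ENNReal.ofReal_pos.mpr hηpos))
  have hgmeas : Measurable g := g_cont.measurable
  have m1 : Measurable fun ξ => (‖F ξ - g ξ‖₊ : ℝ≥0∞)^2 :=
    ((hF.sub hgmeas).nnnorm.coe_nnreal_ennreal).pow_const 2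
  have m1' : Measurable fun ξ => (‖g ξ - F ξ‖₊ : ℝ≥0∞)^2 :=
    ((hgmeas.sub hF).nnnorm.coe_nnreal_ennreal).pow_const 2
  have hI1 : (∫⁻ ξ, (‖F ξ - g ξ‖₊ : ℝ≥0∞)^2) ≤ ENNReal.ofReal K := by
    have h2 : (∫⁻ ξ, (‖F ξ - g ξ‖₊ : ℝ≥0∞)^2) = eLpNorm (F - g) 2 volume ^ 2 := by
      simpa [Pi.sub_apply] using sqInt n (F - g)
    rw [h2]
    calc eLpNorm (F - g) 2 volume ^ 2 ≤ (ENNReal.ofReal η)^2 := by gcongr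
      _ = ENNReal.ofReal K := by
          rw [sq, ← ENNReal.ofReal_mul hηpos.le, hη, Real.mul_self_sqrt hKpos.le]
  obtain ⟨R, hR0, hRsub⟩ := g_supp.isBounded.subset_closedBall_lt 0 0
  obtain ⟨M, hM⟩ := g_cont.bounded_above_of_compact_support g_supp
  have hM0 : (0:ℝ) ≤ M := le_trans (norm_nonneg (g 0)) (hM 0)
  have hIcc : ∀ᶠ β in φ, β ∈ Icc (1/2:ℝ) 2 := by
    have h := Icc_mem_nhds (show (1/2:ℝ) < 1 by norm_num) (show (1:ℝ) < 2 by norm_num)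
    exact eventually_mem_set.mpr (nhdsWithin_le_nhds h)
  have hDCT : Tendsto (fun β : ℝ => ∫⁻ ξ, (‖g ξ - g (β • ξ)‖₊ : ℝ≥0∞)^2) φ (nhds 0) := by
    have h := tendsto_lintegral_filter_of_dominated_convergence
      (μ := (volume : Measure (EuclideanSpace ℝ (Fin n)))) (l := φ)
      (F := fun (β : ℝ) ξ => (‖g ξ - g (β • ξ)‖₊ : ℝ≥0∞)^2)
      (f := fun _ => (0:ℝ≥0∞))
      ((Metric.closedBall (0:EuclideanSpace ℝ (Fin n)) (2*R)).indicator
        fun _ => ENNReal.ofReal (4*M^2))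
      (Eventually.of_forall fun β =>
        (((g_cont.sub (g_cont.comp (continuous_const_smul β))).measurable).nnnorm.coe_nnreal_ennreal).pow_const 2)
      ?_ ?_ ?_
    · simpa using h
    · filter_upwards [hIcc] with β hβ
      refine Eventually.of_forall fun ξ => ?_
      by_cases hξ : ‖ξ‖ ≤ 2*R
      · rw [indicator_of_mem (by simpa [Metric.mem_closedBall, dist_zero_right] using hξ)]
        have h1 : ‖g ξ - g (β • ξ)‖ ≤ 2*M := by
          calc ‖g ξ - g (β • ξ)‖ ≤ ‖g ξ‖ + ‖g (β•ξ)‖ := norm_sub_le _ _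
            _ ≤ M + M := add_le_add (hM _) (hM _)
            _ = 2*M := by ring
        calc (‖g ξ - g (β•ξ)‖₊:ℝ≥0∞)^2 ≤ (ENNReal.ofReal (2*M))^2 := by
              gcongr
              rw [← enorm_eq_nnnorm, ← ofReal_norm_eq_enorm]
              exact ENNReal.ofReal_le_ofReal h1
          _ = ENNReal.ofReal (4*M^2) := by
              rw [sq, ← ENNReal.ofReal_mul (by positivity)]; ring_nf
      · push_neg at hξ
        have hg1 : g ξ = 0 := by
          apply image_eq_zero_of_notMem_tsupport
          intro hmem
          have := hRsub hmem
          rw [Metric.mem_closedBall, dist_zero_right] at this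
          linarith
        have hg2 : g (β•ξ) = 0 := by
          apply image_eq_zero_of_notMem_tsupport
          intro hmem
          have h2 := hRsub hmem
          rw [Metric.mem_closedBall, dist_zero_right] at h2
          have h3 : ‖β • ξ‖ = β * ‖ξ‖ := by
            rw [norm_smul, Real.norm_eq_abs, abs_of_pos (by linarith [hβ.1])]
          nlinarith [hβ.1]
        simp [hg1, hg2]
    · rw [lintegral_indicator measurableSet_closedBall]
      simp only [lintegral_const, Measure.restrict_apply MeasurableSet.univ, univ_inter]
      exact ENNReal.mul_ne_top ENNReal.ofReal_ne_top (measure_closedBall_lt_top).ne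
    · refine Eventually.of_forall fun ξ => ?_
      have hc : Continuous fun β : ℝ => (‖g ξ - g (β • ξ)‖₊ : ℝ≥0∞)^2 := by
        apply (ENNReal.continuous_pow 2).comp
        apply ENNReal.continuous_coe.comp
        exact (continuous_const.sub (g_cont.comp (continuous_id.smul continuous_const))).nnnorm
      have := (hc.tendsto 1).mono_left (nhdsWithin_le_nhds (s := Ioi (0:ℝ)))
      simpa using this
  have hI2ev : ∀ᶠ β in φ, (∫⁻ ξ, (‖g ξ - g (β • ξ)‖₊ : ℝ≥0∞)^2) < ENNReal.ofReal (ε/100) :=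
    hDCT.eventually_lt_const (ENNReal.ofReal_pos.mpr (by positivity))
  filter_upwards [hIcc, hI2ev] with β hβ hI2
  have hβpos : (0:ℝ) < β := lt_of_lt_of_le (by norm_num) hβ.1
  have m2 : Measurable fun ξ => (‖g ξ - g (β • ξ)‖₊ : ℝ≥0∞)^2 :=
    (((g_cont.sub (g_cont.comp (continuous_const_smul β))).measurable).nnnorm.coe_nnreal_ennreal).pow_const 2
  have m3 : Measurable fun ξ => (‖g (β • ξ) - F (β • ξ)‖₊ : ℝ≥0∞)^2 :=
    (((hgmeas.comp (measurable_const_smul β)).sub (hF.comp (measurable_const_smul β))).nnnorm.coe_nnreal_ennreal).pow_const 2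
  have hI3 : (∫⁻ ξ, (‖g (β • ξ) - F (β • ξ)‖₊ : ℝ≥0∞)^2)
      ≤ ENNReal.ofReal (2^n) * ENNReal.ofReal K := by
    have h := lint_smul n (fun x => (‖g x - F x‖₊ : ℝ≥0∞)^2) m1' hβpos
    rw [h]
    have hswap : (∫⁻ x, (‖g x - F x‖₊ : ℝ≥0∞)^2) = ∫⁻ x, (‖F x - g x‖₊ : ℝ≥0∞)^2 := by
      congr 1; ext x; rw [← neg_sub (F x) (g x), nnnorm_neg]
    rw [hswap]
    have hβn : ((β^n)⁻¹ : ℝ) ≤ 2^n := by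
      have h1 : ((1:ℝ)/2)^n ≤ β^n := pow_le_pow_left₀ (by norm_num) hβ.1 n
      have h2 : ((β^n)⁻¹ : ℝ) ≤ (((1:ℝ)/2)^n)⁻¹ := by
        apply inv_anti₀ (by positivity) h1
      calc ((β^n)⁻¹ : ℝ) ≤ (((1:ℝ)/2)^n)⁻¹ := h2
        _ = 2^n := by rw [one_div, inv_pow, inv_inv]
    exact mul_le_mul (ENNReal.ofReal_le_ofReal hβn) hI1 zero_le zero_le
  calc (∫⁻ ξ, (‖F ξ - F (β • ξ)‖₊ : ℝ≥0∞)^2)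
      ≤ ∫⁻ ξ, (4*(‖F ξ - g ξ‖₊:ℝ≥0∞)^2 + (16*(‖g ξ - g (β•ξ)‖₊:ℝ≥0∞)^2
          + 16*(‖g (β•ξ) - F (β•ξ)‖₊:ℝ≥0∞)^2)) := by
        apply lintegral_mono fun ξ => ?_
        calc (‖F ξ - F (β•ξ)‖₊:ℝ≥0∞)^2
            ≤ 4*(‖F ξ - g ξ‖₊:ℝ≥0∞)^2 + 4*(‖g ξ - F (β•ξ)‖₊:ℝ≥0∞)^2 := tri4 _ _ _
          _ ≤ 4*(‖F ξ - g ξ‖₊:ℝ≥0∞)^2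
              + 4*(4*(‖g ξ - g (β•ξ)‖₊:ℝ≥0∞)^2 + 4*(‖g (β•ξ) - F (β•ξ)‖₊:ℝ≥0∞)^2) := by
                gcongr
                exact tri4 _ _ _
          _ = _ := by ring
    _ = 4*(∫⁻ ξ, (‖F ξ - g ξ‖₊:ℝ≥0∞)^2) + (16*(∫⁻ ξ, (‖g ξ - g (β•ξ)‖₊:ℝ≥0∞)^2)
          + 16*(∫⁻ ξ, (‖g (β•ξ) - F (β•ξ)‖₊:ℝ≥0∞)^2)) := by
        rw [lintegral_add_left (m1.const_mul 4), lintegral_add_left (m2.const_mul 16),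
          lintegral_const_mul 4 m1, lintegral_const_mul 16 m2, lintegral_const_mul 16 m3]
    _ ≤ 4*ENNReal.ofReal K + (16*ENNReal.ofReal (ε/100)
          + 16*(ENNReal.ofReal (2^n) * ENNReal.ofReal K)) := by
        gcongr
    _ = ENNReal.ofReal (4*K + (16*(ε/100) + 16*(2^n*K))) := by
        rw [← ENNReal.ofReal_mul (by positivity : (0:ℝ) ≤ (2:ℝ)^n)]
        rw [show (4:ℝ≥0∞) = ENNReal.ofReal 4 by norm_num,
          show (16:ℝ≥0∞) = ENNReal.ofReal 16 by norm_num,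
          ← ENNReal.ofReal_mul (by norm_num), ← ENNReal.ofReal_mul (by norm_num),
          ← ENNReal.ofReal_mul (by norm_num),
          ← ENNReal.ofReal_add (by positivity) (by positivity),
          ← ENNReal.ofReal_add (by positivity) (by positivity)]
    _ < ENNReal.ofReal ε := by
        rw [ENNReal.ofReal_lt_ofReal_iff hε]
        have hKK : (2:ℝ)^n * K = ε/400 := by
          rw [hK]; field_simp
        have hKle : K ≤ ε/400 := by
          rw [← hKK]; nlinarith
        linarith

lemma Dlem (n : ℕ) (s : ℝ) (W : EuclideanSpace ℝ (Fin n) → ℂ) (hWmeas : Measurable W)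
    (hW : ∫⁻ ξ : EuclideanSpace ℝ (Fin n),
        ENNReal.ofReal ((1 + ‖ξ‖ ^ 2) ^ s) * (‖W ξ‖₊ : ℝ≥0∞) ^ 2 < ⊤) :
    ∀ ε : ℝ, 0 < ε → ∀ᶠ β in nhdsWithin (1:ℝ) (Ioi 0),
      (∫⁻ ξ : EuclideanSpace ℝ (Fin n),
        ENNReal.ofReal ((1 + ‖ξ‖ ^ 2) ^ s) * (‖W ξ - W (β • ξ)‖₊ : ℝ≥0∞) ^ 2)
        < ENNReal.ofReal ε := by
  intro ε hε
  set φ := nhdsWithin (1:ℝ) (Ioi 0) with hφ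
  set F : EuclideanSpace ℝ (Fin n) → ℂ :=
    fun ξ => (((1 + ‖ξ‖^2) ^ (s/2) : ℝ) : ℂ) * W ξ with hFdef
  have hFapp : ∀ x : EuclideanSpace ℝ (Fin n), F x = (((1 + ‖x‖^2) ^ (s/2) : ℝ) : ℂ) * W x :=
    fun _ => rfl
  have hFmeas : Measurable F :=
    ((Complex.continuous_ofReal.comp (meas_weight n (s/2))).measurable).mul hWmeas
  have hFpt : ∀ ξ : EuclideanSpace ℝ (Fin n),
      ENNReal.ofReal ((1 + ‖ξ‖^2) ^ s) * (‖W ξ‖₊ : ℝ≥0∞)^2 = (‖F ξ‖₊ : ℝ≥0∞)^2 :=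
    fun ξ => pointwise_w s (‖ξ‖^2) (by positivity) (W ξ)
  have hFint : (∫⁻ ξ, (‖F ξ‖₊ : ℝ≥0∞)^2) < ⊤ := by
    rw [show (∫⁻ ξ, (‖F ξ‖₊ : ℝ≥0∞)^2)
        = ∫⁻ ξ : EuclideanSpace ℝ (Fin n),
          ENNReal.ofReal ((1 + ‖ξ‖^2) ^ s) * (‖W ξ‖₊ : ℝ≥0∞)^2 by
      congr 1; ext ξ; exact (hFpt ξ).symm]
    exact hW
  have hF2 : MemLp F 2 (volume : Measure (EuclideanSpace ℝ (Fin n))) := by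
    refine ⟨hFmeas.aestronglyMeasurable, ?_⟩
    have hlt : eLpNorm F 2 volume ^ 2 < ⊤ := by rw [← sqInt n F]; exact hFint
    rcases eq_top_or_lt_top (eLpNorm F 2 volume) with h | h
    · rw [h] at hlt; exact absurd hlt (by simp)
    · exact h
  set c2 : ℝ := (∫⁻ ξ, (‖F ξ‖₊ : ℝ≥0∞)^2).toReal with hc2
  have hc2nn : 0 ≤ c2 := ENNReal.toReal_nonneg
  have hIF : (∫⁻ ξ, (‖F ξ‖₊ : ℝ≥0∞)^2) = ENNReal.ofReal c2 := by
    rw [hc2, ENNReal.ofReal_toReal hFint.ne]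
  -- delta
  set δ : ℝ → ℝ := fun β => (max (β^2) (β^2)⁻¹) ^ |s/2| - 1 with hδdef
  have hδ0 : ∀ β : ℝ, 0 < β → 0 ≤ δ β := by
    intro β hβ
    have h1 : (1:ℝ) ≤ max (β^2) (β^2)⁻¹ := by
      rcases le_total (β^2) 1 with h | h
      · exact le_max_of_le_right (by rw [le_inv_comm₀ one_pos (by positivity)]; simpa using h)
      · exact le_max_of_le_left h
    have := Real.one_le_rpow h1 (abs_nonneg (s/2))
    simp only [hδdef]; linarith
  set θ : ℝ := ε / (8 * 2^n * (c2+1)) with hθ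
  have hθpos : 0 < θ := by positivity
  have hδev : ∀ᶠ β in φ, (δ β)^2 < θ := by
    have hcont : ContinuousAt (fun β : ℝ => (δ β)^2) 1 := by
      have h1 : ContinuousAt (fun β : ℝ => max (β^2) (β^2)⁻¹) 1 := by
        exact ContinuousAt.sup ((continuous_pow 2).continuousAt)
          (((continuous_pow 2).continuousAt).inv₀ (by norm_num))
      have h2 : ContinuousAt (fun β : ℝ => (max (β^2) (β^2)⁻¹) ^ |s/2|) 1 := by
        apply ContinuousAt.rpow_const h1
        left
        norm_num
      exact ((h2.sub continuousAt_const).pow 2)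
    have hval : (δ (1:ℝ))^2 = 0 := by
      simp [hδdef, Real.one_rpow]
    have ht : Tendsto (fun β : ℝ => (δ β)^2) φ (nhds 0) := by
      have h2 : Tendsto (fun β : ℝ => (δ β)^2) (nhds 1) (nhds ((δ (1:ℝ))^2)) := hcont
      rw [hval] at h2
      exact h2.mono_left (nhdsWithin_le_nhds (s := Ioi (0:ℝ)))
    exact ht.eventually_lt_const hθpos
  have hIoi : ∀ᶠ β in φ, β ∈ Ioi (0:ℝ) := eventually_mem_set.mpr self_mem_nhdsWithin
  have hIcc : ∀ᶠ β in φ, β ∈ Icc (1/2:ℝ) 2 := by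
    have h := Icc_mem_nhds (show (1/2:ℝ) < 1 by norm_num) (show (1:ℝ) < 2 by norm_num)
    exact eventually_mem_set.mpr (nhdsWithin_le_nhds h)
  have hdilev := Hdil n F hFmeas hF2 (ε/16) (by positivity)
  filter_upwards [hIoi, hIcc, hδev, hdilev] with β hβ0 hβIcc hδsm hdil
  have hβpos : (0:ℝ) < β := hβ0
  have hδnn := hδ0 β hβpos
  -- pointwise bound
  have hpoint : ∀ ξ : EuclideanSpace ℝ (Fin n),
      ENNReal.ofReal ((1 + ‖ξ‖^2) ^ s) * (‖W ξ - W (β • ξ)‖₊ : ℝ≥0∞)^2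
        ≤ 4*(‖F ξ - F (β • ξ)‖₊ : ℝ≥0∞)^2
          + 4*(ENNReal.ofReal ((δ β)^2) * (‖F (β • ξ)‖₊ : ℝ≥0∞)^2) := by
    intro ξ
    set t : ℝ := ‖ξ‖^2 with htdef
    have ht : 0 ≤ t := by positivity
    have hvnorm : ‖β • ξ‖^2 = β^2 * t := by
      rw [norm_smul, Real.norm_eq_abs, abs_of_pos hβpos, mul_pow, htdef]
    set G : ℂ := (((1 + t) ^ (s/2) : ℝ) : ℂ) * W (β • ξ) with hGdef
    have e1 : ENNReal.ofReal ((1 + t) ^ s) * (‖W ξ - W (β • ξ)‖₊ : ℝ≥0∞)^2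
        = (‖F ξ - G‖₊ : ℝ≥0∞)^2 := by
      rw [pointwise_w s t ht (W ξ - W (β • ξ))]
      congr 2
      simp only [hFapp, hGdef, ← htdef]
      push_cast
      ring
    have e2 : (‖F ξ - G‖₊ : ℝ≥0∞)^2
        ≤ 4*(‖F ξ - F (β • ξ)‖₊ : ℝ≥0∞)^2 + 4*(‖F (β • ξ) - G‖₊ : ℝ≥0∞)^2 :=
      tri4 _ _ _
    have e3 : (‖F (β • ξ) - G‖₊ : ℝ≥0∞)^2
        ≤ ENNReal.ofReal ((δ β)^2) * (‖F (β • ξ)‖₊ : ℝ≥0∞)^2 := by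
      have hdiff : F (β • ξ) - G
          = ((((1 + β^2*t) ^ (s/2) - (1 + t) ^ (s/2) : ℝ)) : ℂ) * W (β • ξ) := by
        simp only [hFapp, hGdef, hvnorm]
        push_cast
        ring
      set M : ℝ := max (β^2) (β^2)⁻¹ with hMdef
      have hM1 : (1:ℝ) ≤ M := by
        rcases le_total (β^2) 1 with h | h
        · exact le_max_of_le_right (by rw [le_inv_comm₀ one_pos (by positivity)]; simpa using h)
        · exact le_max_of_le_left h
      have hMa : β^2 ≤ M := le_max_left _ _
      have hMb : (1:ℝ) ≤ M * β^2 := by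
        have h := le_max_right (β^2) (β^2)⁻¹
        calc (1:ℝ) = (β^2)⁻¹ * β^2 := by field_simp
          _ ≤ M * β^2 := by gcongr
      have habs : |(1 + β^2*t) ^ (s/2) - (1 + t) ^ (s/2)|
          ≤ (δ β) * (1 + β^2*t) ^ (s/2) := by
        have := abs_rpow_sub_le (s/2) (u := 1 + t) (v := 1 + β^2*t)
          (by positivity) (by positivity) hM1 (by nlinarith) (by nlinarith)
        rw [abs_sub_comm] at this
        simpa [hδdef, hMdef] using this
      rw [hdiff]
      have hnn : (‖((((1 + β^2*t) ^ (s/2) - (1 + t) ^ (s/2) : ℝ)) : ℂ) * W (β • ξ)‖₊ : ℝ≥0∞)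
          ≤ ENNReal.ofReal ((δ β) * (1 + β^2*t) ^ (s/2)) * (‖W (β • ξ)‖₊ : ℝ≥0∞) := by
        rw [nnnorm_mul, Complex.nnnorm_real]
        push_cast
        gcongr
        rw [← enorm_eq_nnnorm, Real.enorm_eq_ofReal_abs]
        exact ENNReal.ofReal_le_ofReal habs
      calc (‖((((1 + β^2*t) ^ (s/2) - (1 + t) ^ (s/2) : ℝ)) : ℂ) * W (β • ξ)‖₊ : ℝ≥0∞)^2
          ≤ (ENNReal.ofReal ((δ β) * (1 + β^2*t) ^ (s/2)) * (‖W (β • ξ)‖₊ : ℝ≥0∞))^2 := by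
            gcongr
        _ = ENNReal.ofReal ((δ β)^2)
            * (ENNReal.ofReal ((1 + β^2*t) ^ s) * (‖W (β • ξ)‖₊ : ℝ≥0∞)^2) := by
            have ha2 : ((1 + β^2*t) ^ (s/2))^2 = (1 + β^2*t) ^ s := by
              rw [← Real.rpow_natCast ((1 + β^2*t) ^ (s/2)) 2,
                ← Real.rpow_mul (by positivity)]
              norm_num
            rw [mul_pow, ← ENNReal.ofReal_pow (by positivity), mul_pow (δ β) _ 2, ha2,
              ENNReal.ofReal_mul (by positivity), mul_assoc]
        _ = ENNReal.ofReal ((δ β)^2) * (‖F (β • ξ)‖₊ : ℝ≥0∞)^2 := by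
            congr 1
            have hpw := pointwise_w s (β^2*t) (by positivity) (W (β • ξ))
            rw [hpw]
            simp only [hFapp, hvnorm]
    calc ENNReal.ofReal ((1 + t) ^ s) * (‖W ξ - W (β • ξ)‖₊ : ℝ≥0∞)^2
        = (‖F ξ - G‖₊ : ℝ≥0∞)^2 := e1
      _ ≤ 4*(‖F ξ - F (β • ξ)‖₊ : ℝ≥0∞)^2 + 4*(‖F (β • ξ) - G‖₊ : ℝ≥0∞)^2 := e2
      _ ≤ _ := by gcongr
  -- integrate
  have mFd : Measurable fun ξ => (‖F ξ - F (β • ξ)‖₊ : ℝ≥0∞)^2 :=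
    ((hFmeas.sub (hFmeas.comp (measurable_const_smul β))).nnnorm.coe_nnreal_ennreal).pow_const 2
  have mFb : Measurable fun ξ => (‖F (β • ξ)‖₊ : ℝ≥0∞)^2 :=
    ((hFmeas.comp (measurable_const_smul β)).nnnorm.coe_nnreal_ennreal).pow_const 2
  have hscale : (∫⁻ ξ, (‖F (β • ξ)‖₊ : ℝ≥0∞)^2) ≤ ENNReal.ofReal (2^n) * ENNReal.ofReal c2 := by
    have h := lint_smul n (fun x => (‖F x‖₊ : ℝ≥0∞)^2)
      ((hFmeas.nnnorm.coe_nnreal_ennreal).pow_const 2) hβpos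
    rw [h, hIF]
    have hβn : ((β^n)⁻¹ : ℝ) ≤ 2^n := by
      have h1 : ((1:ℝ)/2)^n ≤ β^n := pow_le_pow_left₀ (by norm_num) hβIcc.1 n
      calc ((β^n)⁻¹ : ℝ) ≤ (((1:ℝ)/2)^n)⁻¹ := inv_anti₀ (by positivity) h1
        _ = 2^n := by rw [one_div, inv_pow, inv_inv]
    gcongr
  calc (∫⁻ ξ : EuclideanSpace ℝ (Fin n),
        ENNReal.ofReal ((1 + ‖ξ‖^2) ^ s) * (‖W ξ - W (β • ξ)‖₊ : ℝ≥0∞)^2)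
      ≤ ∫⁻ ξ, (4*(‖F ξ - F (β • ξ)‖₊ : ℝ≥0∞)^2
          + 4*(ENNReal.ofReal ((δ β)^2) * (‖F (β • ξ)‖₊ : ℝ≥0∞)^2)) :=
        lintegral_mono hpoint
    _ = 4*(∫⁻ ξ, (‖F ξ - F (β • ξ)‖₊ : ℝ≥0∞)^2)
        + 4*(ENNReal.ofReal ((δ β)^2) * (∫⁻ ξ, (‖F (β • ξ)‖₊ : ℝ≥0∞)^2)) := by
        rw [lintegral_add_left (mFd.const_mul 4)]
        congr 1
        · exact lintegral_const_mul 4 mFd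
        · rw [lintegral_const_mul 4 (mFb.const_mul (ENNReal.ofReal ((δ β)^2))),
            lintegral_const_mul (ENNReal.ofReal ((δ β)^2)) mFb]
    _ ≤ 4*ENNReal.ofReal (ε/16)
        + 4*(ENNReal.ofReal θ * (ENNReal.ofReal (2^n) * ENNReal.ofReal c2)) := by
        gcongr
    _ = ENNReal.ofReal (4*(ε/16) + 4*(θ * (2^n * c2))) := by
        have hA : (4:ℝ≥0∞)*ENNReal.ofReal (ε/16) = ENNReal.ofReal (4*(ε/16)) := by
          rw [← ENNReal.ofReal_ofNat, ← ENNReal.ofReal_mul (by norm_num)]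
        have hB : (4:ℝ≥0∞)*(ENNReal.ofReal θ * (ENNReal.ofReal (2^n) * ENNReal.ofReal c2))
            = ENNReal.ofReal (4*(θ * (2^n * c2))) := by
          rw [← ENNReal.ofReal_mul (by positivity), ← ENNReal.ofReal_mul hθpos.le,
            ← ENNReal.ofReal_ofNat, ← ENNReal.ofReal_mul (by norm_num)]
        rw [hA, hB, ← ENNReal.ofReal_add (by positivity) (by positivity)]
    _ < ENNReal.ofReal ε := by
        rw [ENNReal.ofReal_lt_ofReal_iff hε]
        have key : 4*(θ * (2^n * c2)) ≤ ε/2 := by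
          have h2npos : (0:ℝ) < 2^n := by positivity
          rw [hθ]
          have hcalc : 4*((ε/(8*2^n*(c2+1)))*(2^n*c2)) = (ε * c2)/(2*(c2+1)) := by
            field_simp
            ring
          rw [hcalc, div_le_div_iff₀ (by positivity) (by norm_num)]
          nlinarith [mul_nonneg hε.le hc2nn]
        linarith

/-- Proposition 2.2, on the Fourier side: if the rescaling with `k` converges
locally uniformly in `H^s` to the self-similar profile with Fourier transform `W(τ^α ξ)`, and
`l/k → C ∈ (0,∞)` with `k, l` regularly varying of index `α`, then the rescaling with `l`
converges locally uniformly in `H^s` to the profile with Fourier transform `W(τ^α ξ / C)`. -/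
theorem rescaling_asymptotically_proportional
    (n : ℕ) (hn : 1 ≤ n) (s : ℝ) (α : ℝ) (hα : 0 ≤ α) (C : ℝ) (hC : 0 < C)
    (k l : ℝ → ℝ) (hkpos : ∀ t : ℝ, 0 ≤ t → 0 < k t) (hlpos : ∀ t : ℝ, 0 ≤ t → 0 < l t)
    (hkreg : ∀ τ : ℝ, 0 < τ → Tendsto (fun T => k (T * τ) / k T) atTop (nhds (τ ^ α)))
    (hlreg : ∀ τ : ℝ, 0 < τ → Tendsto (fun T => l (T * τ) / l T) atTop (nhds (τ ^ α)))
    (hlk : Tendsto (fun t => l t / k t) atTop (nhds C))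
    (v : ℝ → EuclideanSpace ℝ (Fin n) → ℂ) (hv : ∀ t : ℝ, Measurable (v t))
    (W : EuclideanSpace ℝ (Fin n) → ℂ) (hWmeas : Measurable W)
    (hW : ∫⁻ ξ : EuclideanSpace ℝ (Fin n),
        ENNReal.ofReal ((1 + ‖ξ‖ ^ 2) ^ s) * (‖W ξ‖₊ : ℝ≥0∞) ^ 2 < ⊤)
    (hconv : ∀ c d : ℝ, 0 < c → c < d → ∀ ε : ℝ, 0 < ε → ∀ᶠ T in atTop,
      ∀ τ ∈ Icc c d,
        (∫⁻ ξ : EuclideanSpace ℝ (Fin n),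
            ENNReal.ofReal ((1 + ‖ξ‖ ^ 2) ^ s) *
              (‖v (T * τ) ((k T)⁻¹ • ξ) - W ((τ ^ α) • ξ)‖₊ : ℝ≥0∞) ^ 2)
          < ENNReal.ofReal ε) :
    ∀ c d : ℝ, 0 < c → c < d → ∀ ε : ℝ, 0 < ε → ∀ᶠ T in atTop,
      ∀ τ ∈ Icc c d,
        (∫⁻ ξ : EuclideanSpace ℝ (Fin n),
            ENNReal.ofReal ((1 + ‖ξ‖ ^ 2) ^ s) *
              (‖v (T * τ) ((l T)⁻¹ • ξ) - W ((τ ^ α / C) • ξ)‖₊ : ℝ≥0∞) ^ 2)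
          < ENNReal.ofReal ε := by
  intro c d hc hcd ε hε
  -- constants
  set B₁ : ℝ := (1 + (2*C)^2 + (2/C)^2) ^ |s| with hB₁
  set q : ℝ := ((c ^ α)⁻¹)^n with hq
  set B₀ : ℝ := (1 + ((c ^ α)⁻¹)^2 + (d ^ α)^2) ^ |s| with hB₀
  have hcα : (0:ℝ) < c ^ α := Real.rpow_pos_of_pos hc α
  have hdα : (0:ℝ) < d ^ α := Real.rpow_pos_of_pos (lt_trans hc hcd) α
  have hB₁pos : 0 < B₁ := Real.rpow_pos_of_pos (by positivity) _
  have hB₀pos : 0 < B₀ := Real.rpow_pos_of_pos (by positivity) _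
  have hqpos : 0 < q := by positivity
  set Kc : ℝ := 4*(2*C)^n * B₁ * (1 + q * B₀) with hKc
  have hKcpos : 0 < Kc := by positivity
  set ε' : ℝ := ε / (2*Kc) with hε'def
  have hε' : 0 < ε' := by positivity
  -- eventual facts
  have hT0ev : ∀ᶠ T in atTop, (0:ℝ) ≤ T := eventually_ge_atTop 0
  have haev : ∀ᶠ T in atTop, l T / k T ∈ Icc (C/2) (2*C) :=
    hlk.eventually (eventually_mem_set.mpr
      (Icc_mem_nhds (by linarith) (by linarith)))
  have hkev := hconv c d hc hcd ε' hε'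
  have hb1 : Tendsto (fun T => l T / k T / C) atTop (nhds 1) := by
    have h := hlk.div_const C
    rwa [div_self (ne_of_gt hC)] at h
  have hb2 : ∀ᶠ T in atTop, l T / k T / C ∈ Ioi (0:ℝ) := by
    filter_upwards [hT0ev] with T hT
    exact div_pos (div_pos (hlpos T hT) (hkpos T hT)) hC
  have hβT : Tendsto (fun T => l T / k T / C) atTop (nhdsWithin 1 (Ioi 0)) :=
    tendsto_nhdsWithin_iff.mpr ⟨hb1, hb2⟩
  have hDev := hβT.eventually (Dlem n s W hWmeas hW ε' hε')
  filter_upwards [hT0ev, haev, hkev, hDev] with T hT0 haT hkT hDT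
  intro τ hτ
  have hkT0 : 0 < k T := hkpos T hT0
  have hlT0 : 0 < l T := hlpos T hT0
  set a : ℝ := l T / k T with ha
  have hapos : 0 < a := div_pos hlT0 hkT0
  have haub : a ≤ 2*C := haT.2
  have halb : C/2 ≤ a := haT.1
  have hainv : a⁻¹ ≤ 2/C := by
    rw [show (2/C : ℝ) = (C/2)⁻¹ by rw [inv_div]]
    exact inv_anti₀ (by positivity) halb
  have hτpos : 0 < τ := lt_of_lt_of_le hc hτ.1
  have hτα : (0:ℝ) < τ ^ α := Real.rpow_pos_of_pos hτpos α
  have hτα1 : c ^ α ≤ τ ^ α := Real.rpow_le_rpow hc.le hτ.1 hα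
  have hτα2 : τ ^ α ≤ d ^ α := Real.rpow_le_rpow hτpos.le hτ.2 hα
  set β : ℝ := a / C with hβ
  have hβpos : 0 < β := div_pos hapos hC
  -- measurable functions
  have hm1 : Measurable fun ξ : EuclideanSpace ℝ (Fin n) =>
      ENNReal.ofReal ((1 + ‖ξ‖^2) ^ s) *
        (‖v (T*τ) ((l T)⁻¹ • ξ) - W ((τ^α/C) • ξ)‖₊ : ℝ≥0∞)^2 :=
    meas_int n s ((hv _).comp (measurable_const_smul _))
      (hWmeas.comp (measurable_const_smul _))
  have hm2 : Measurable fun η : EuclideanSpace ℝ (Fin n) =>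
      ENNReal.ofReal ((1 + ‖η‖^2) ^ s) *
        (‖v (T*τ) ((k T)⁻¹ • η) - W ((τ^α*β) • η)‖₊ : ℝ≥0∞)^2 :=
    meas_int n s ((hv _).comp (measurable_const_smul _))
      (hWmeas.comp (measurable_const_smul _))
  have hm3 : Measurable fun η : EuclideanSpace ℝ (Fin n) =>
      ENNReal.ofReal ((1 + ‖η‖^2) ^ s) *
        (‖v (T*τ) ((k T)⁻¹ • η) - W ((τ^α) • η)‖₊ : ℝ≥0∞)^2 :=
    meas_int n s ((hv _).comp (measurable_const_smul _))
      (hWmeas.comp (measurable_const_smul _))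
  have hm4 : Measurable fun η : EuclideanSpace ℝ (Fin n) =>
      ENNReal.ofReal ((1 + ‖η‖^2) ^ s) *
        (‖W ((τ^α) • η) - W ((τ^α*β) • η)‖₊ : ℝ≥0∞)^2 :=
    meas_int n s (hWmeas.comp (measurable_const_smul _))
      (hWmeas.comp (measurable_const_smul _))
  have hm5 : Measurable fun ζ : EuclideanSpace ℝ (Fin n) =>
      ENNReal.ofReal ((1 + ‖ζ‖^2) ^ s) * (‖W ζ - W (β • ζ)‖₊ : ℝ≥0∞)^2 :=
    meas_int n s hWmeas (hWmeas.comp (measurable_const_smul _))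
  -- the k-integral and D-integral bounds
  have hIk : (∫⁻ η : EuclideanSpace ℝ (Fin n),
      ENNReal.ofReal ((1 + ‖η‖^2) ^ s) *
        (‖v (T*τ) ((k T)⁻¹ • η) - W ((τ^α) • η)‖₊ : ℝ≥0∞)^2) < ENNReal.ofReal ε' :=
    hkT τ hτ
  have hD : (∫⁻ ζ : EuclideanSpace ℝ (Fin n),
      ENNReal.ofReal ((1 + ‖ζ‖^2) ^ s) * (‖W ζ - W (β • ζ)‖₊ : ℝ≥0∞)^2) < ENNReal.ofReal ε' :=
    hDT
  -- Q bound
  have hQ : (∫⁻ η : EuclideanSpace ℝ (Fin n),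
      ENNReal.ofReal ((1 + ‖η‖^2) ^ s) *
        (‖W ((τ^α) • η) - W ((τ^α*β) • η)‖₊ : ℝ≥0∞)^2)
      ≤ ENNReal.ofReal q * (ENNReal.ofReal B₀ * (∫⁻ ζ : EuclideanSpace ℝ (Fin n),
          ENNReal.ofReal ((1 + ‖ζ‖^2) ^ s) * (‖W ζ - W (β • ζ)‖₊ : ℝ≥0∞)^2)) := by
    have hRpos : (0:ℝ) < (τ^α)⁻¹ := by positivity
    rw [lint_smul' n _ hm4 hRpos]
    have hcomp : ∀ ζ : EuclideanSpace ℝ (Fin n),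
        ENNReal.ofReal ((1 + ‖(τ^α)⁻¹ • ζ‖^2) ^ s) *
          (‖W ((τ^α) • ((τ^α)⁻¹ • ζ)) - W ((τ^α*β) • ((τ^α)⁻¹ • ζ))‖₊ : ℝ≥0∞)^2
        ≤ ENNReal.ofReal B₀ * (ENNReal.ofReal ((1 + ‖ζ‖^2) ^ s) *
            (‖W ζ - W (β • ζ)‖₊ : ℝ≥0∞)^2) := by
      intro ζ
      have e1 : (τ^α) • ((τ^α)⁻¹ • ζ) = ζ := by
        rw [smul_smul, mul_inv_cancel₀ (ne_of_gt hτα), one_smul]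
      have e2 : (τ^α*β) • ((τ^α)⁻¹ • ζ) = β • ζ := by
        rw [smul_smul]
        congr 1
        field_simp
      rw [e1, e2, ← mul_assoc]
      apply mul_le_mul_left
      have := weight_cmp' n s (a := (τ^α)⁻¹) (A₁ := (c^α)⁻¹) (A₂ := d^α)
        hRpos (inv_anti₀ hcα hτα1) (by rw [inv_inv]; exact hτα2) ζ
      rw [hB₀]
      exact this
    calc ENNReal.ofReal (((τ^α)⁻¹)^n) * ∫⁻ ζ, (fun η : EuclideanSpace ℝ (Fin n) =>
          ENNReal.ofReal ((1 + ‖η‖^2) ^ s) *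
            (‖W ((τ^α) • η) - W ((τ^α*β) • η)‖₊ : ℝ≥0∞)^2) ((τ^α)⁻¹ • ζ)
        ≤ ENNReal.ofReal q * ∫⁻ ζ : EuclideanSpace ℝ (Fin n),
            ENNReal.ofReal B₀ * (ENNReal.ofReal ((1 + ‖ζ‖^2) ^ s) *
              (‖W ζ - W (β • ζ)‖₊ : ℝ≥0∞)^2) := by
          refine mul_le_mul' ?_ (lintegral_mono fun ζ => hcomp ζ)
          rw [hq]
          exact ENNReal.ofReal_le_ofReal
            (pow_le_pow_left₀ (by positivity) (inv_anti₀ hcα hτα1) n)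
      _ = ENNReal.ofReal q * (ENNReal.ofReal B₀ * _) := by
          rw [lintegral_const_mul _ hm5]
  -- main chain
  calc (∫⁻ ξ : EuclideanSpace ℝ (Fin n),
        ENNReal.ofReal ((1 + ‖ξ‖ ^ 2) ^ s) *
          (‖v (T * τ) ((l T)⁻¹ • ξ) - W ((τ ^ α / C) • ξ)‖₊ : ℝ≥0∞) ^ 2)
      = ENNReal.ofReal (a^n) * ∫⁻ η : EuclideanSpace ℝ (Fin n),
          ENNReal.ofReal ((1 + ‖a • η‖^2) ^ s) *
            (‖v (T*τ) ((k T)⁻¹ • η) - W ((τ^α*β) • η)‖₊ : ℝ≥0∞)^2 := by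
        rw [lint_smul' n _ hm1 hapos]
        congr 1
        apply lintegral_congr
        intro η
        have e1 : (l T)⁻¹ • (a • η) = (k T)⁻¹ • η := by
          rw [smul_smul, ha]
          congr 1
          field_simp
        have e2 : (τ^α/C) • (a • η) = (τ^α*β) • η := by
          rw [smul_smul, hβ]
          congr 1
          ring
        rw [e1, e2]
    _ ≤ ENNReal.ofReal ((2*C)^n) * ∫⁻ η : EuclideanSpace ℝ (Fin n),
          ENNReal.ofReal B₁ * (ENNReal.ofReal ((1 + ‖η‖^2) ^ s) *
            (‖v (T*τ) ((k T)⁻¹ • η) - W ((τ^α*β) • η)‖₊ : ℝ≥0∞)^2) := by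
        refine mul_le_mul' (ENNReal.ofReal_le_ofReal
          (pow_le_pow_left₀ hapos.le haub n)) (lintegral_mono fun η => ?_)
        rw [← mul_assoc]
        apply mul_le_mul_left
        have := weight_cmp' n s (a := a) (A₁ := 2*C) (A₂ := 2/C) hapos haub hainv η
        rw [hB₁]
        exact this
    _ = ENNReal.ofReal ((2*C)^n) * (ENNReal.ofReal B₁ * ∫⁻ η : EuclideanSpace ℝ (Fin n),
          ENNReal.ofReal ((1 + ‖η‖^2) ^ s) *
            (‖v (T*τ) ((k T)⁻¹ • η) - W ((τ^α*β) • η)‖₊ : ℝ≥0∞)^2) := by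
        rw [lintegral_const_mul _ hm2]
    _ ≤ ENNReal.ofReal ((2*C)^n) * (ENNReal.ofReal B₁ *
          (4*(∫⁻ η : EuclideanSpace ℝ (Fin n),
              ENNReal.ofReal ((1 + ‖η‖^2) ^ s) *
                (‖v (T*τ) ((k T)⁻¹ • η) - W ((τ^α) • η)‖₊ : ℝ≥0∞)^2)
            + 4*(∫⁻ η : EuclideanSpace ℝ (Fin n),
              ENNReal.ofReal ((1 + ‖η‖^2) ^ s) *
                (‖W ((τ^α) • η) - W ((τ^α*β) • η)‖₊ : ℝ≥0∞)^2))) := by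
        apply mul_le_mul_right
        apply mul_le_mul_right
        calc (∫⁻ η : EuclideanSpace ℝ (Fin n),
              ENNReal.ofReal ((1 + ‖η‖^2) ^ s) *
                (‖v (T*τ) ((k T)⁻¹ • η) - W ((τ^α*β) • η)‖₊ : ℝ≥0∞)^2)
            ≤ ∫⁻ η : EuclideanSpace ℝ (Fin n),
              (4*(ENNReal.ofReal ((1 + ‖η‖^2) ^ s) *
                (‖v (T*τ) ((k T)⁻¹ • η) - W ((τ^α) • η)‖₊ : ℝ≥0∞)^2)
              + 4*(ENNReal.ofReal ((1 + ‖η‖^2) ^ s) *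
                (‖W ((τ^α) • η) - W ((τ^α*β) • η)‖₊ : ℝ≥0∞)^2)) := by
              apply lintegral_mono
              intro η
              have htri := tri4 (v (T*τ) ((k T)⁻¹ • η)) (W ((τ^α) • η)) (W ((τ^α*β) • η))
              calc ENNReal.ofReal ((1 + ‖η‖^2) ^ s) *
                    (‖v (T*τ) ((k T)⁻¹ • η) - W ((τ^α*β) • η)‖₊ : ℝ≥0∞)^2
                  ≤ ENNReal.ofReal ((1 + ‖η‖^2) ^ s) *
                    (4*(‖v (T*τ) ((k T)⁻¹ • η) - W ((τ^α) • η)‖₊ : ℝ≥0∞)^2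
                      + 4*(‖W ((τ^α) • η) - W ((τ^α*β) • η)‖₊ : ℝ≥0∞)^2) :=
                    mul_le_mul_right htri _
                _ = _ := by ring
          _ = _ := by
              rw [lintegral_add_left (hm3.const_mul 4), lintegral_const_mul 4 hm3,
                lintegral_const_mul 4 hm4]
    _ ≤ ENNReal.ofReal ((2*C)^n) * (ENNReal.ofReal B₁ *
          (4*ENNReal.ofReal ε'
            + 4*(ENNReal.ofReal q * (ENNReal.ofReal B₀ * ENNReal.ofReal ε')))) := by
        apply mul_le_mul_right
        apply mul_le_mul_right
        exact add_le_add (mul_le_mul_right hIk.le 4)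
          (mul_le_mul_right (hQ.trans (mul_le_mul_right
            (mul_le_mul_right hD.le (ENNReal.ofReal B₀)) (ENNReal.ofReal q))) 4)
    _ = ENNReal.ofReal ((2*C)^n * (B₁ * (4*ε' + 4*(q * (B₀ * ε'))))) := by
        rw [← ENNReal.ofReal_mul hB₀pos.le, ← ENNReal.ofReal_mul hqpos.le,
          ← ENNReal.ofReal_ofNat, ← ENNReal.ofReal_mul (by norm_num),
          ← ENNReal.ofReal_mul (by norm_num),
          ← ENNReal.ofReal_add (by positivity) (by positivity),
          ← ENNReal.ofReal_mul hB₁pos.le,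
          ← ENNReal.ofReal_mul (by positivity)]
    _ ≤ ENNReal.ofReal (ε/2) := by
        apply ENNReal.ofReal_le_ofReal
        have heq : (2*C)^n * (B₁ * (4*ε' + 4*(q * (B₀ * ε')))) = Kc * ε' := by
          rw [hKc]; ring
        have heq2 : Kc * ε' = ε/2 := by
          rw [hε'def]
          field_simp
        rw [heq, heq2]
    _ < ENNReal.ofReal ε := by
        rw [ENNReal.ofReal_lt_ofReal_iff hε]
        linarith
end

section
/- Let T₀ > 0 and let (A_n)_{n≥1} and A_∞ be real-valued functions in L¹(0,T₀) with ‖A_n − A_∞‖_{L¹(0,T₀)} → 0 as n → ∞. For each ρ ≥ 0 and each n ∈ ℕ ∪ {∞}, the Volterra integral equation w(t) + ρ ∫₀ᵗ A_n(t−σ) w(σ) dσ = 1 has a unique continuous solution w_n(ρ,·) on [0,T₀], and sup_{t∈[0,T₀]} |w_n(ρ,t) − w_∞(ρ,t)| → 0 as n → ∞, uniformly for ρ in compact subsets of [0,∞). -/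
open MeasureTheory Set Filter intervalIntegral

/-- `IsVolterraSol T₀ B ρ w` : `w` is a continuous solution on `[0,T₀]` of the
Volterra equation `w(t) + ρ ∫₀ᵗ B(t−σ) w(σ) dσ = 1`. -/
def IsVolterraSol (T₀ : ℝ) (B : ℝ → ℝ) (ρ : ℝ) (w : ℝ → ℝ) : Prop :=
  ContinuousOn w (Icc 0 T₀) ∧
    ∀ t ∈ Icc (0:ℝ) T₀, w t + ρ * ∫ σ in (0:ℝ)..t, B (t - σ) * w σ = 1

namespace VolterraAux

noncomputable section

/-- clamp to `[0,T₀]`. -/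
def proj (T₀ t : ℝ) : ℝ := max 0 (min t T₀)

lemma proj_mem {T₀ : ℝ} (hT₀ : 0 ≤ T₀) (t : ℝ) : proj T₀ t ∈ Icc 0 T₀ :=
  ⟨le_max_left _ _, max_le (by linarith) (min_le_right _ _)⟩

lemma proj_eq {T₀ t : ℝ} (ht : t ∈ Icc 0 T₀) : proj T₀ t = t := by
  simp [proj, min_eq_left ht.2, max_eq_right ht.1]

lemma continuous_proj {T₀ : ℝ} : Continuous (proj T₀) := by
  unfold proj; fun_prop

lemma proj_idem {T₀ : ℝ} (hT₀ : 0 ≤ T₀) (t : ℝ) : proj T₀ (proj T₀ t) = proj T₀ t :=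
  proj_eq (proj_mem hT₀ t)

variable {T₀ : ℝ} {B v : ℝ → ℝ}

lemma integrableOn_ker_mul (hB : IntegrableOn B (Ioc 0 T₀))
    (hv : ContinuousOn v (Icc 0 T₀)) {t : ℝ} (ht : t ∈ Icc 0 T₀) :
    IntegrableOn (fun s => B s * v (t - s)) (Ioc 0 t) := by
  have hBt : IntegrableOn B (Ioc 0 t) := hB.mono_set (Ioc_subset_Ioc_right ht.2)
  have hvc : ContinuousOn (fun s => v (t - s)) (Icc 0 t) := by
    refine hv.comp (by fun_prop) (fun s hs => ?_)
    exact ⟨by linarith [hs.2], by linarith [hs.1, ht.2]⟩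
  exact hBt.mul_continuousOn_of_subset hvc measurableSet_Ioc isCompact_Icc Ioc_subset_Icc_self

/-- key Volterra substitution: `∫₀ᵗ B(t−σ) v σ dσ = ∫₀ᵗ B s v(t−s) ds`. -/
lemma conv_substitution (B v : ℝ → ℝ) (t : ℝ) :
    (∫ σ in (0:ℝ)..t, B (t - σ) * v σ) = ∫ s in (0:ℝ)..t, B s * v (t - s) := by
  have h := intervalIntegral.integral_comp_sub_left (a := (0:ℝ)) (b := t)
      (fun s => B s * v (t - s)) t
  simp only [sub_self, sub_zero] at h
  rw [← h]
  congr 1 with σ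
  congr 2
  ring

lemma expker_integrableOn (hB : IntegrableOn B (Ioc 0 T₀)) (l : ℝ) (hl : 0 ≤ l) :
    IntegrableOn (fun s => |B s| * Real.exp (-(l * s))) (Ioc 0 T₀) := by
  have : IntegrableOn (fun s => Real.exp (-(l * s)) * |B s|) (Ioc 0 T₀) := by
    refine Integrable.bdd_mul (c := 1) hB.abs ?_ ?_
    · exact (Real.continuous_exp.comp (by fun_prop)).aestronglyMeasurable
    · filter_upwards [ae_restrict_mem measurableSet_Ioc] with s hs
      rw [Real.norm_eq_abs, abs_of_pos (Real.exp_pos _)]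
      exact Real.exp_le_one_iff.2 (by nlinarith [hs.1])
  exact this.congr_fun (fun s _ => mul_comm _ _) measurableSet_Ioc

lemma expker_nonneg (l : ℝ) : 0 ≤ ∫ s in Ioc (0:ℝ) T₀, |B s| * Real.exp (-(l * s)) :=
  setIntegral_nonneg measurableSet_Ioc fun s _ =>
    mul_nonneg (abs_nonneg _) (Real.exp_pos _).le

/-- Key weighted estimate for the Volterra convolution. -/
lemma conv_bound (hB : IntegrableOn B (Ioc 0 T₀))
    (hv : ContinuousOn v (Icc 0 T₀)) {t l C : ℝ} (ht : t ∈ Icc 0 T₀)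
    (hl : 0 ≤ l) (hC : 0 ≤ C)
    (hvb : ∀ σ ∈ Icc (0:ℝ) T₀, |v σ| ≤ C * Real.exp (l * σ)) :
    |∫ s in (0:ℝ)..t, B s * v (t - s)| ≤
      (∫ s in Ioc (0:ℝ) T₀, |B s| * Real.exp (-(l * s))) * (C * Real.exp (l * t)) := by
  have hint : IntegrableOn (fun s => B s * v (t - s)) (Ioc 0 t) :=
    integrableOn_ker_mul hB hv ht
  have hdom : IntegrableOn (fun s => |B s| * Real.exp (-(l * s)) * (C * Real.exp (l * t)))
      (Ioc 0 T₀) := (expker_integrableOn hB l hl).mul_const _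
  rw [intervalIntegral.integral_of_le ht.1]
  calc |∫ s in Ioc (0:ℝ) t, B s * v (t - s)|
      ≤ ∫ s in Ioc (0:ℝ) t, |B s| * |v (t - s)| := by
        simpa [Real.norm_eq_abs] using
          norm_integral_le_integral_norm (μ := volume.restrict (Ioc (0:ℝ) t))
            (fun s => B s * v (t - s))
    _ ≤ ∫ s in Ioc (0:ℝ) t, |B s| * Real.exp (-(l * s)) * (C * Real.exp (l * t)) := by
        have habs : IntegrableOn (fun s => |B s| * |v (t - s)|) (Ioc 0 t) := by
          refine (?_ : Integrable (fun s => |B s| * |v (t - s)|) (volume.restrict (Ioc 0 t)))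
          simpa [abs_mul] using hint.abs
        refine setIntegral_mono_on habs (hdom.mono_set (Ioc_subset_Ioc_right ht.2))
          measurableSet_Ioc (fun s hs => ?_)
        have hts : t - s ∈ Icc (0:ℝ) T₀ := ⟨by linarith [hs.2], by linarith [hs.1, ht.2]⟩
        have h1 : |v (t - s)| ≤ C * Real.exp (l * (t - s)) := hvb _ hts
        calc |B s| * |v (t - s)| ≤ |B s| * (C * Real.exp (l * (t - s))) :=
              mul_le_mul_of_nonneg_left h1 (abs_nonneg _)
          _ = |B s| * Real.exp (-(l * s)) * (C * Real.exp (l * t)) := by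
              rw [show l * (t - s) = l * t + -(l * s) by ring, Real.exp_add]
              ring
    _ ≤ ∫ s in Ioc (0:ℝ) T₀, |B s| * Real.exp (-(l * s)) * (C * Real.exp (l * t)) := by
        refine setIntegral_mono_set hdom ?_ ?_
        · filter_upwards [ae_restrict_mem measurableSet_Ioc] with s _
          positivity
        · exact HasSubset.Subset.eventuallyLE (Ioc_subset_Ioc_right ht.2)
    _ = (∫ s in Ioc (0:ℝ) T₀, |B s| * Real.exp (-(l * s))) * (C * Real.exp (l * t)) :=
        MeasureTheory.integral_mul_const _ _

/-- choice of the exponential weight. -/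
lemma exists_lambda (hB : IntegrableOn B (Ioc 0 T₀)) (c δ : ℝ) (hδ : 0 < δ) :
    ∃ l : ℝ, 0 ≤ l ∧ c * ∫ s in Ioc (0:ℝ) T₀, |B s| * Real.exp (-(l * s)) ≤ δ := by
  rcases le_or_gt c 0 with hc | hc
  · exact ⟨0, le_refl _, le_trans (mul_nonpos_of_nonpos_of_nonneg hc (expker_nonneg 0)) hδ.le⟩
  · have htend : Tendsto (fun n : ℕ => ∫ s in Ioc (0:ℝ) T₀,
        |B s| * Real.exp (-((n : ℝ) * s))) atTop (nhds 0) := by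
      have h := tendsto_integral_of_dominated_convergence (μ := volume.restrict (Ioc (0:ℝ) T₀))
        (F := fun n : ℕ => fun s => |B s| * Real.exp (-((n : ℝ) * s)))
        (f := fun _ => (0:ℝ)) (fun s => |B s|)
        (fun n => ((expker_integrableOn hB (n:ℝ) (by positivity)).aestronglyMeasurable))
        hB.abs ?_ ?_
      · simpa using h
      · intro n
        filter_upwards [ae_restrict_mem measurableSet_Ioc] with s hs
        rw [Real.norm_eq_abs, abs_mul, abs_abs, abs_of_pos (Real.exp_pos _)]
        nlinarith [Real.exp_le_one_iff.2 (neg_nonpos.2 (mul_nonneg (Nat.cast_nonneg n) hs.1.le)),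
          abs_nonneg (B s), Real.exp_pos (-((n:ℝ) * s))]
      · filter_upwards [ae_restrict_mem measurableSet_Ioc] with s hs
        have hlim : Tendsto (fun n : ℕ => Real.exp (-((n : ℝ) * s))) atTop (nhds 0) := by
          have heq : ∀ n : ℕ, Real.exp (-((n : ℝ) * s)) = (Real.exp (-s)) ^ n := by
            intro n
            rw [← Real.exp_nat_mul]
            ring_nf
          simp only [heq]
          exact tendsto_pow_atTop_nhds_zero_of_lt_one (Real.exp_pos _).le
            (Real.exp_lt_one_iff.2 (by linarith [hs.1]))
        simpa using (tendsto_const_nhds (x := |B s|)).mul hlim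
    have hev : ∀ᶠ n : ℕ in atTop, ∫ s in Ioc (0:ℝ) T₀,
        |B s| * Real.exp (-((n : ℝ) * s)) < δ / c :=
      htend.eventually (eventually_lt_nhds (by positivity))
    rcases hev.exists with ⟨n, hn⟩
    exact ⟨(n : ℝ), Nat.cast_nonneg n, le_of_lt ((lt_div_iff₀' hc).mp hn)⟩

/-- Gronwall-type lemma for the Volterra inequality with `L¹` kernel. -/
lemma gronwall (hT₀ : 0 < T₀) (hB : IntegrableOn B (Ioc 0 T₀)) {u : ℝ → ℝ}
    (hu : ContinuousOn u (Icc 0 T₀)) {c l G : ℝ} (hc : 0 ≤ c) (hl : 0 ≤ l) (hG : 0 ≤ G)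
    (hsmall : c * ∫ s in Ioc (0:ℝ) T₀, |B s| * Real.exp (-(l * s)) ≤ 1/2)
    (hrel : ∀ t ∈ Icc (0:ℝ) T₀, |u t| ≤ G + c * |∫ s in (0:ℝ)..t, B s * u (t - s)|) :
    ∀ t ∈ Icc (0:ℝ) T₀, |u t| ≤ 2 * G * Real.exp (l * T₀) := by
  set I : ℝ := ∫ s in Ioc (0:ℝ) T₀, |B s| * Real.exp (-(l * s)) with hIdef
  have hφ : ContinuousOn (fun σ => Real.exp (-(l * σ)) * |u σ|) (Icc 0 T₀) :=
    (Real.continuous_exp.comp (by fun_prop)).continuousOn.mul hu.abs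
  obtain ⟨σ₀, hσ₀mem, hσ₀⟩ := isCompact_Icc.exists_isMaxOn (nonempty_Icc.2 hT₀.le) hφ
  set C : ℝ := Real.exp (-(l * σ₀)) * |u σ₀| with hCdef
  have hC : 0 ≤ C := mul_nonneg (Real.exp_pos _).le (abs_nonneg _)
  have hub : ∀ σ ∈ Icc (0:ℝ) T₀, |u σ| ≤ C * Real.exp (l * σ) := by
    intro σ hσ
    have h1 : Real.exp (-(l * σ)) * |u σ| ≤ C := hσ₀ hσ
    have key : Real.exp (-(l * σ)) * Real.exp (l * σ) = 1 := by
      rw [← Real.exp_add]; simp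
    have h1' := mul_le_mul_of_nonneg_right h1 (Real.exp_pos (l * σ)).le
    rw [mul_assoc, mul_comm (|u σ|), ← mul_assoc, key, one_mul] at h1'
    exact h1'
  have hCle : C ≤ 2 * G := by
    have h2 := conv_bound hB hu hσ₀mem hl hC hub
    have h4 : c * |∫ s in (0:ℝ)..σ₀, B s * u (σ₀ - s)| ≤ 1/2 * (C * Real.exp (l * σ₀)) := by
      calc c * |∫ s in (0:ℝ)..σ₀, B s * u (σ₀ - s)| ≤ c * (I * (C * Real.exp (l * σ₀))) :=
            mul_le_mul_of_nonneg_left h2 hc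
        _ = (c * I) * (C * Real.exp (l * σ₀)) := by ring
        _ ≤ 1/2 * (C * Real.exp (l * σ₀)) := by
            have hpos : (0:ℝ) ≤ C * Real.exp (l * σ₀) := by positivity
            exact mul_le_mul_of_nonneg_right hsmall hpos
    have h5 : |u σ₀| ≤ G + 1/2 * (C * Real.exp (l * σ₀)) :=
      (hrel σ₀ hσ₀mem).trans (by linarith)
    have hexple : Real.exp (-(l * σ₀)) ≤ 1 :=
      Real.exp_le_one_iff.2 (by nlinarith [hσ₀mem.1, hl])
    have hkey : Real.exp (-(l * σ₀)) * Real.exp (l * σ₀) = 1 := by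
      rw [← Real.exp_add]; simp
    have h6 : C ≤ G + C / 2 := by
      have h7 := mul_le_mul_of_nonneg_left h5 (Real.exp_pos (-(l * σ₀))).le
      rw [hCdef]
      calc Real.exp (-(l * σ₀)) * |u σ₀|
          ≤ Real.exp (-(l * σ₀)) * (G + 1/2 * (C * Real.exp (l * σ₀))) := h7
        _ = Real.exp (-(l * σ₀)) * G
            + 1/2 * C * (Real.exp (-(l * σ₀)) * Real.exp (l * σ₀)) := by ring
        _ = Real.exp (-(l * σ₀)) * G + C / 2 := by rw [hkey]; ring
        _ ≤ G + C / 2 := by nlinarith [Real.exp_pos (-(l * σ₀))]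
    linarith
  intro t htmem
  calc |u t| ≤ C * Real.exp (l * t) := hub t htmem
    _ ≤ 2 * G * Real.exp (l * T₀) := by
        have hmono : Real.exp (l * t) ≤ Real.exp (l * T₀) :=
          Real.exp_le_exp.2 (mul_le_mul_of_nonneg_left htmem.2 hl)
        nlinarith [Real.exp_pos (l * t)]

lemma conv_integral_indicator (hT₀ : 0 ≤ T₀) {t' : ℝ} (ht' : t' ∈ Icc (0:ℝ) T₀) (f : ℝ → ℝ) :
    (∫ s in (0:ℝ)..t', f s) =
      ∫ s in Ioc (0:ℝ) T₀, (Ioc (0:ℝ) t').indicator f s := by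
  rw [intervalIntegral.integral_of_le ht'.1, setIntegral_indicator measurableSet_Ioc,
    Ioc_inter_Ioc, sup_idem, min_eq_right ht'.2]

/-- Continuity of the Volterra convolution with an `L¹` kernel and continuous `v`. -/
lemma conv_continuousOn (hT₀ : 0 ≤ T₀) (hB : IntegrableOn B (Ioc 0 T₀)) (hv : Continuous v) :
    ContinuousOn (fun t => ∫ s in (0:ℝ)..t, B s * v (t - s)) (Icc 0 T₀) := by
  obtain ⟨M, hM⟩ := (isCompact_Icc (a := (0:ℝ)) (b := T₀)).exists_bound_of_continuousOn
    hv.continuousOn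
  have hM0 : 0 ≤ M := le_trans (norm_nonneg _) (hM 0 ⟨le_refl _, hT₀⟩)
  intro t ht
  show Tendsto _ (nhdsWithin t (Icc 0 T₀)) _
  rw [tendsto_iff_seq_tendsto]
  intro x hx
  have hxmem : ∀ᶠ n in atTop, x n ∈ Icc (0:ℝ) T₀ :=
    hx.eventually (eventually_mem_nhdsWithin)
  have hxt : Tendsto x atTop (nhds t) := hx.mono_right nhdsWithin_le_nhds
  set y : ℕ → ℝ := fun n => proj T₀ (x n) with hydef
  have hymem : ∀ n, y n ∈ Icc (0:ℝ) T₀ := fun n => proj_mem hT₀ _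
  have hy : Tendsto y atTop (nhds t) := by
    have := (continuous_proj (T₀ := T₀)).continuousAt.tendsto.comp hxt
    rw [proj_eq ht] at this
    exact this
  -- dominated convergence for the sequence `y`
  have hDCT : Tendsto (fun n => ∫ s in Ioc (0:ℝ) T₀,
      (Ioc (0:ℝ) (y n)).indicator (fun s => B s * v (y n - s)) s) atTop
      (nhds (∫ s in Ioc (0:ℝ) T₀, (Ioc (0:ℝ) t).indicator (fun s => B s * v (t - s)) s)) := by
    refine tendsto_integral_of_dominated_convergence (fun s => |B s| * M) ?_ (hB.abs.mul_const M)
      ?_ ?_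
    · intro n
      exact (hB.aestronglyMeasurable.mul
        ((hv.comp (continuous_const.sub continuous_id)).aestronglyMeasurable)).indicator
        measurableSet_Ioc
    · intro n
      filter_upwards [ae_restrict_mem measurableSet_Ioc] with s hs
      by_cases hmem : s ∈ Ioc (0:ℝ) (y n)
      · rw [indicator_of_mem hmem]
        have hys : y n - s ∈ Icc (0:ℝ) T₀ :=
          ⟨by linarith [hmem.2], by linarith [hmem.1, (hymem n).2]⟩
        rw [Real.norm_eq_abs, abs_mul]
        exact mul_le_mul_of_nonneg_left (hM _ hys) (abs_nonneg _)
      · rw [indicator_of_notMem hmem]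
        simp only [norm_zero]
        positivity
    · have hne : ∀ᵐ s ∂(volume.restrict (Ioc (0:ℝ) T₀)), s ≠ t := by
        refine ae_restrict_of_ae ?_
        rw [ae_iff]
        simpa using Real.volume_singleton (x := t) ▸ (by
          have : {a : ℝ | ¬ a ≠ t} = {t} := by ext a; simp
          rw [this]; exact Real.volume_singleton)
      filter_upwards [ae_restrict_mem measurableSet_Ioc, hne] with s hs hst
      rcases lt_or_gt_of_ne hst with hlt | hgt
      · -- s < t : eventually s ∈ Ioc 0 (y n)
        have hev : ∀ᶠ n in atTop, s < y n := hy.eventually (eventually_gt_nhds hlt)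
        have heq : ∀ᶠ n in atTop, (Ioc (0:ℝ) (y n)).indicator
            (fun s => B s * v (y n - s)) s = B s * v (y n - s) := by
          filter_upwards [hev] with n hn
          exact indicator_of_mem (mem_Ioc.mpr ⟨hs.1, hn.le⟩) _
        have hlim : Tendsto (fun n => B s * v (y n - s)) atTop (nhds (B s * v (t - s))) :=
          tendsto_const_nhds.mul ((hv.tendsto _).comp (hy.sub tendsto_const_nhds))
        rw [indicator_of_mem (mem_Ioc.mpr ⟨hs.1, hlt.le⟩)]
        exact hlim.congr' (heq.mono fun n h => h.symm)
      · -- t < s : eventually s ∉ Ioc 0 (y n)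
        have hev : ∀ᶠ n in atTop, y n < s := hy.eventually (eventually_lt_nhds hgt)
        have heq : ∀ᶠ n in atTop, (Ioc (0:ℝ) (y n)).indicator
            (fun s => B s * v (y n - s)) s = 0 := by
          filter_upwards [hev] with n hn
          exact indicator_of_notMem (fun hmem => absurd hmem.2 (not_le.2 hn)) _
        rw [indicator_of_notMem (fun hmem => absurd hmem.2 (not_le.2 hgt))]
        exact tendsto_const_nhds.congr' (heq.mono fun n h => h.symm)
  -- identify with the interval integrals
  have hfin : Tendsto (fun n => ∫ s in (0:ℝ)..(y n), B s * v (y n - s)) atTop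
      (nhds (∫ s in (0:ℝ)..t, B s * v (t - s))) := by
    rw [conv_integral_indicator hT₀ ht]
    refine hDCT.congr (fun n => ?_)
    rw [conv_integral_indicator hT₀ (hymem n)]
  refine hfin.congr' ?_
  filter_upwards [hxmem] with n hn
  simp only [Function.comp]
  rw [hydef]
  simp only [proj_eq hn]

lemma intervalIntegrable_ker_mul (hB : IntegrableOn B (Ioc 0 T₀))
    (hv : ContinuousOn v (Icc 0 T₀)) {t : ℝ} (ht : t ∈ Icc 0 T₀) :
    IntervalIntegrable (fun s => B s * v (t - s)) volume 0 t := by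
  rw [intervalIntegrable_iff, uIoc_of_le ht.1]
  exact integrableOn_ker_mul hB hv ht

/-- Picard iterates for the Volterra equation. -/
def iter (T₀ : ℝ) (B : ℝ → ℝ) (ρ : ℝ) : ℕ → ℝ → ℝ
  | 0 => fun _ => 1
  | (j+1) => fun t => 1 - ρ * ∫ s in (0:ℝ)..(proj T₀ t), B s * iter T₀ B ρ j (proj T₀ t - s)

lemma iter_zero (T₀ : ℝ) (B : ℝ → ℝ) (ρ t : ℝ) : iter T₀ B ρ 0 t = 1 := rfl

lemma iter_succ (T₀ : ℝ) (B : ℝ → ℝ) (ρ : ℝ) (j : ℕ) (t : ℝ) :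
    iter T₀ B ρ (j+1) t
      = 1 - ρ * ∫ s in (0:ℝ)..(proj T₀ t), B s * iter T₀ B ρ j (proj T₀ t - s) := by
  simp only [iter]

lemma iter_succ' (hT₀ : 0 ≤ T₀) (B : ℝ → ℝ) (ρ : ℝ) (j : ℕ) {t : ℝ} (ht : t ∈ Icc (0:ℝ) T₀) :
    iter T₀ B ρ (j+1) t
      = 1 - ρ * ∫ s in (0:ℝ)..t, B s * iter T₀ B ρ j (t - s) := by
  rw [iter_succ, proj_eq ht]

lemma iter_cont (hT₀ : 0 ≤ T₀) (hB : IntegrableOn B (Ioc 0 T₀)) (ρ : ℝ) :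
    ∀ j, Continuous (iter T₀ B ρ j) := by
  intro j
  induction j with
  | zero => exact continuous_const
  | succ j ih =>
    have hiter : iter T₀ B ρ (j+1) = fun t =>
        1 - ρ * ∫ s in (0:ℝ)..(proj T₀ t), B s * iter T₀ B ρ j (proj T₀ t - s) :=
      funext (iter_succ T₀ B ρ j)
    rw [hiter]
    have hF : ContinuousOn (fun τ => ∫ s in (0:ℝ)..τ, B s * iter T₀ B ρ j (τ - s))
        (Icc 0 T₀) := conv_continuousOn hT₀ hB ih
    have hcomp : Continuous fun t =>
        ∫ s in (0:ℝ)..(proj T₀ t), B s * iter T₀ B ρ j (proj T₀ t - s) :=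
      hF.comp_continuous continuous_proj (proj_mem hT₀)
    exact continuous_const.sub (continuous_const.mul hcomp)

lemma iter_proj (hT₀ : 0 ≤ T₀) (B : ℝ → ℝ) (ρ : ℝ) (j : ℕ) (t : ℝ) :
    iter T₀ B ρ j t = iter T₀ B ρ j (proj T₀ t) := by
  cases j with
  | zero => rfl
  | succ j => rw [iter_succ, iter_succ, proj_idem hT₀]

lemma exists_sol (hT₀ : 0 < T₀) (hB : IntegrableOn B (Ioc 0 T₀)) {ρ : ℝ} (hρ : 0 ≤ ρ) :
    ∃ w : ℝ → ℝ, ContinuousOn w (Icc 0 T₀) ∧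
      ∀ t ∈ Icc (0:ℝ) T₀, w t + ρ * ∫ s in (0:ℝ)..t, B s * w (t - s) = 1 := by
  obtain ⟨l, hl, hsmall⟩ := exists_lambda hB ρ (1/2) (by norm_num)
  set J : ℝ := ∫ s in Ioc (0:ℝ) T₀, |B s| * Real.exp (-(0 * s)) with hJdef
  have hJ0 : 0 ≤ J := expker_nonneg 0
  set D : ℝ := ρ * J with hDdef
  have hD0 : 0 ≤ D := mul_nonneg hρ hJ0
  have hIcont : ∀ j, Continuous (iter T₀ B ρ j) := iter_cont hT₀.le hB ρ
  -- the geometric decay of the consecutive differences on `Icc 0 T₀`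
  have hdiff : ∀ j, ∀ t ∈ Icc (0:ℝ) T₀,
      |iter T₀ B ρ (j+1) t - iter T₀ B ρ j t| ≤ D * (1/2)^j * Real.exp (l * t) := by
    intro j
    induction j with
    | zero =>
      intro t ht
      have h1 : iter T₀ B ρ 1 t = 1 - ρ * ∫ s in (0:ℝ)..t, B s * iter T₀ B ρ 0 (t - s) :=
        iter_succ' hT₀.le B ρ 0 ht
      have hcb := conv_bound hB ((hIcont 0).continuousOn) ht (le_refl 0) zero_le_one
        (fun σ _ => by rw [iter_zero]; simp)
      have h2 : iter T₀ B ρ 1 t - iter T₀ B ρ 0 t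
          = -(ρ * ∫ s in (0:ℝ)..t, B s * iter T₀ B ρ 0 (t - s)) := by
        rw [h1, iter_zero]; ring
      rw [h2, abs_neg, abs_mul, abs_of_nonneg hρ]
      calc ρ * |∫ s in (0:ℝ)..t, B s * iter T₀ B ρ 0 (t - s)|
          ≤ ρ * (J * (1 * Real.exp (0 * t))) := mul_le_mul_of_nonneg_left hcb hρ
        _ = D := by rw [hDdef]; simp
        _ ≤ D * (1/2)^0 * Real.exp (l * t) := by
            have h3 : (1:ℝ) ≤ Real.exp (l * t) := by
              rw [← Real.exp_zero]
              exact Real.exp_le_exp.2 (mul_nonneg hl ht.1)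
            nlinarith
    | succ j ih =>
      intro t ht
      have hv : Continuous fun σ => iter T₀ B ρ (j+1) σ - iter T₀ B ρ j σ :=
        (hIcont _).sub (hIcont _)
      have hi1 := intervalIntegrable_ker_mul hB (hIcont (j+1)).continuousOn ht
      have hi2 := intervalIntegrable_ker_mul hB (hIcont j).continuousOn ht
      have heq : iter T₀ B ρ (j+2) t - iter T₀ B ρ (j+1) t
          = -(ρ * ∫ s in (0:ℝ)..t,
              B s * (iter T₀ B ρ (j+1) (t - s) - iter T₀ B ρ j (t - s))) := by
        have e1 : iter T₀ B ρ (j+2) t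
            = 1 - ρ * ∫ s in (0:ℝ)..t, B s * iter T₀ B ρ (j+1) (t - s) :=
          iter_succ' hT₀.le B ρ (j+1) ht
        have e2 : iter T₀ B ρ (j+1) t
            = 1 - ρ * ∫ s in (0:ℝ)..t, B s * iter T₀ B ρ j (t - s) :=
          iter_succ' hT₀.le B ρ j ht
        rw [e1, e2]
        have hsub : (∫ s in (0:ℝ)..t,
              (B s * iter T₀ B ρ (j+1) (t-s) - B s * iter T₀ B ρ j (t-s)))
            = (∫ s in (0:ℝ)..t, B s * iter T₀ B ρ (j+1) (t-s))
              - ∫ s in (0:ℝ)..t, B s * iter T₀ B ρ j (t-s) :=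
          intervalIntegral.integral_sub hi1 hi2
        have hcongr : (∫ s in (0:ℝ)..t,
              B s * (iter T₀ B ρ (j+1) (t-s) - iter T₀ B ρ j (t-s)))
            = ∫ s in (0:ℝ)..t,
              (B s * iter T₀ B ρ (j+1) (t-s) - B s * iter T₀ B ρ j (t-s)) := by
          simp only [mul_sub]
        rw [hcongr, hsub]
        ring
      have hcb := conv_bound hB hv.continuousOn ht hl (by positivity : (0:ℝ) ≤ D * (1/2)^j) ih
      rw [heq, abs_neg, abs_mul, abs_of_nonneg hρ]
      calc ρ * |∫ s in (0:ℝ)..t, B s * (iter T₀ B ρ (j+1) (t-s) - iter T₀ B ρ j (t-s))|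
          ≤ ρ * ((∫ s in Ioc (0:ℝ) T₀, |B s| * Real.exp (-(l * s)))
              * (D * (1/2)^j * Real.exp (l * t))) := mul_le_mul_of_nonneg_left hcb hρ
        _ = (ρ * ∫ s in Ioc (0:ℝ) T₀, |B s| * Real.exp (-(l * s)))
              * (D * (1/2)^j * Real.exp (l * t)) := by ring
        _ ≤ 1/2 * (D * (1/2)^j * Real.exp (l * t)) :=
            mul_le_mul_of_nonneg_right hsmall (by positivity)
        _ = D * (1/2)^(j+1) * Real.exp (l * t) := by ring
  -- global geometric bound
  have hdiffall : ∀ j, ∀ t : ℝ,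
      |iter T₀ B ρ (j+1) t - iter T₀ B ρ j t| ≤ D * Real.exp (l * T₀) * (1/2)^j := by
    intro j t
    rw [iter_proj hT₀.le B ρ (j+1) t, iter_proj hT₀.le B ρ j t]
    have hmem := proj_mem hT₀.le t
    calc |iter T₀ B ρ (j+1) (proj T₀ t) - iter T₀ B ρ j (proj T₀ t)|
        ≤ D * (1/2)^j * Real.exp (l * proj T₀ t) := hdiff j _ hmem
      _ ≤ D * (1/2)^j * Real.exp (l * T₀) := by
          have hmono : Real.exp (l * proj T₀ t) ≤ Real.exp (l * T₀) :=
            Real.exp_le_exp.2 (mul_le_mul_of_nonneg_left hmem.2 hl)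
          exact mul_le_mul_of_nonneg_left hmono (by positivity)
      _ = D * Real.exp (l * T₀) * (1/2)^j := by ring
  -- uniform convergence of the telescoping series
  have hsum : Summable (fun j : ℕ => D * Real.exp (l * T₀) * (1/2)^j) :=
    (summable_geometric_of_lt_one (by norm_num) (by norm_num)).mul_left _
  set w : ℝ → ℝ := fun t => 1 + ∑' j, (iter T₀ B ρ (j+1) t - iter T₀ B ρ j t) with hwdef
  have hTU := tendstoUniformlyOn_tsum_nat (s := (univ : Set ℝ)) hsum
    (f := fun j t => iter T₀ B ρ (j+1) t - iter T₀ B ρ j t)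
    (fun j x _ => by simpa [Real.norm_eq_abs] using hdiffall j x)
  have hpartial : ∀ (N : ℕ) (t : ℝ),
      (∑ j ∈ Finset.range N, (iter T₀ B ρ (j+1) t - iter T₀ B ρ j t))
        = iter T₀ B ρ N t - 1 := by
    intro N t
    rw [Finset.sum_range_sub (fun j => iter T₀ B ρ j t), iter_zero]
  have hwc : Continuous w := by
    have hc : ContinuousOn (fun t => ∑' j, (iter T₀ B ρ (j+1) t - iter T₀ B ρ j t))
        (univ : Set ℝ) := by
      refine hTU.continuousOn ?_
      refine Frequently.of_forall (fun N => ?_)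
      exact (continuous_finset_sum _ (fun j _ => ((hIcont _).sub (hIcont _)))).continuousOn
    rw [hwdef]
    exact continuous_const.add (continuousOn_univ.1 hc)
  have hpt : ∀ t : ℝ, Tendsto (fun N => iter T₀ B ρ N t) atTop (nhds (w t)) := by
    intro t
    have h1 : Tendsto (fun N => ∑ j ∈ Finset.range N, (iter T₀ B ρ (j+1) t - iter T₀ B ρ j t))
        atTop (nhds (∑' j, (iter T₀ B ρ (j+1) t - iter T₀ B ρ j t))) :=
      (hTU.tendsto_at (mem_univ t))
    have h2 := tendsto_const_nhds (x := (1:ℝ)) (f := atTop (α := ℕ)) |>.add h1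
    refine h2.congr (fun N => ?_)
    rw [hpartial N t]
    ring
  -- pass to the limit in the recurrence
  refine ⟨w, hwc.continuousOn, fun t ht => ?_⟩
  have hrec : ∀ N : ℕ, iter T₀ B ρ (N+1) t
      = 1 - ρ * ∫ s in (0:ℝ)..t, B s * iter T₀ B ρ N (t - s) :=
    fun N => iter_succ' hT₀.le B ρ N ht
  have hLHS : Tendsto (fun N => iter T₀ B ρ (N+1) t) atTop (nhds (w t)) :=
    (hpt t).comp (tendsto_add_atTop_nat 1)
  have hconv2 : Tendsto (fun N => ∫ s in (0:ℝ)..t, B s * iter T₀ B ρ N (t - s)) atTop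
      (nhds (∫ s in (0:ℝ)..t, B s * w (t - s))) := by
    rw [Metric.tendsto_atTop]
    intro ε hε
    have hε' : 0 < ε / (2 * (J + 1)) := by positivity
    have huni := (Metric.tendstoUniformlyOn_iff.mp hTU) (ε / (2 * (J + 1))) hε'
    rw [eventually_atTop] at huni
    obtain ⟨N₀, hN₀⟩ := huni
    refine ⟨N₀, fun N hN => ?_⟩
    have hbd : ∀ σ ∈ Icc (0:ℝ) T₀, |iter T₀ B ρ N σ - w σ|
        ≤ ε / (2 * (J + 1)) * Real.exp (0 * σ) := by
      intro σ _
      have := hN₀ N hN σ (mem_univ σ)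
      rw [Real.dist_eq] at this
      have heq2 : (∑' j, (iter T₀ B ρ (j+1) σ - iter T₀ B ρ j σ))
          - (∑ j ∈ Finset.range N, (iter T₀ B ρ (j+1) σ - iter T₀ B ρ j σ))
          = w σ - iter T₀ B ρ N σ := by
        rw [hpartial N σ, hwdef]
        ring
      rw [heq2] at this
      rw [abs_sub_comm]
      simpa using this.le
    have hvNw : ContinuousOn (fun σ => iter T₀ B ρ N σ - w σ) (Icc 0 T₀) :=
      ((hIcont N).sub hwc).continuousOn
    have hcb := conv_bound hB hvNw ht (le_refl 0) hε'.le hbd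
    have hi1 := intervalIntegrable_ker_mul hB (hIcont N).continuousOn ht
    have hi2 := intervalIntegrable_ker_mul hB hwc.continuousOn ht
    rw [Real.dist_eq, ← intervalIntegral.integral_sub hi1 hi2]
    have hintegrand : ∀ s : ℝ, B s * iter T₀ B ρ N (t - s) - B s * w (t - s)
        = B s * (iter T₀ B ρ N (t - s) - w (t - s)) := fun s => by ring
    simp only [hintegrand]
    calc |∫ s in (0:ℝ)..t, B s * (iter T₀ B ρ N (t - s) - w (t - s))|
        ≤ J * (ε / (2 * (J + 1)) * Real.exp (0 * t)) := hcb
      _ = J * (ε / (2 * (J + 1))) := by simp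
      _ < ε := by
          have hd : ε / (2 * (J + 1)) * (2 * (J + 1)) = ε := by
            field_simp
          nlinarith [hε', hJ0]
  have hRHS : Tendsto (fun N => iter T₀ B ρ (N+1) t) atTop
      (nhds (1 - ρ * ∫ s in (0:ℝ)..t, B s * w (t - s))) := by
    have := (tendsto_const_nhds (x := (1:ℝ)) (f := atTop (α := ℕ))).sub
      ((tendsto_const_nhds (x := ρ) (f := atTop (α := ℕ))).mul hconv2)
    exact this.congr (fun N => (hrec N).symm)
  have := tendsto_nhds_unique hLHS hRHS
  linarith [this]

lemma sol_eq' {ρ : ℝ} {w : ℝ → ℝ} (h : IsVolterraSol T₀ B ρ w) :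
    ∀ t ∈ Icc (0:ℝ) T₀, w t + ρ * ∫ s in (0:ℝ)..t, B s * w (t - s) = 1 := by
  intro t ht
  have h2 := h.2 t ht
  rwa [conv_substitution] at h2

lemma isVolterraSol_of {ρ : ℝ} {w : ℝ → ℝ} (hcont : ContinuousOn w (Icc 0 T₀))
    (heq : ∀ t ∈ Icc (0:ℝ) T₀, w t + ρ * ∫ s in (0:ℝ)..t, B s * w (t - s) = 1) :
    IsVolterraSol T₀ B ρ w :=
  ⟨hcont, fun t ht => by rw [conv_substitution]; exact heq t ht⟩

lemma exists_isVolterraSol (hT₀ : 0 < T₀) (hB : IntegrableOn B (Ioc 0 T₀)) {ρ : ℝ}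
    (hρ : 0 ≤ ρ) : ∃ w, IsVolterraSol T₀ B ρ w := by
  obtain ⟨w, h1, h2⟩ := exists_sol hT₀ hB hρ
  exact ⟨w, isVolterraSol_of h1 h2⟩

lemma unique_isVolterraSol (hT₀ : 0 < T₀) (hB : IntegrableOn B (Ioc 0 T₀)) {ρ : ℝ}
    (hρ : 0 ≤ ρ) {w w' : ℝ → ℝ} (h : IsVolterraSol T₀ B ρ w) (h' : IsVolterraSol T₀ B ρ w') :
    EqOn w w' (Icc 0 T₀) := by
  obtain ⟨l, hl, hsmall⟩ := exists_lambda hB ρ (1/2) (by norm_num)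
  have hu : ContinuousOn (fun t => w t - w' t) (Icc 0 T₀) := h.1.sub h'.1
  have hrel : ∀ t ∈ Icc (0:ℝ) T₀, |w t - w' t|
      ≤ 0 + ρ * |∫ s in (0:ℝ)..t, B s * (w (t - s) - w' (t - s))| := by
    intro t ht
    have e1 := sol_eq' h t ht
    have e2 := sol_eq' h' t ht
    have hi1 := intervalIntegrable_ker_mul hB h.1 ht
    have hi2 := intervalIntegrable_ker_mul hB h'.1 ht
    have hsub : (∫ s in (0:ℝ)..t, (B s * w (t-s) - B s * w' (t-s)))
        = (∫ s in (0:ℝ)..t, B s * w (t-s)) - ∫ s in (0:ℝ)..t, B s * w' (t-s) :=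
      intervalIntegral.integral_sub hi1 hi2
    have hcongr : (∫ s in (0:ℝ)..t, B s * (w (t-s) - w' (t-s)))
        = ∫ s in (0:ℝ)..t, (B s * w (t-s) - B s * w' (t-s)) := by simp only [mul_sub]
    have hkey : w t - w' t
        = -(ρ * ∫ s in (0:ℝ)..t, B s * (w (t-s) - w' (t-s))) := by
      rw [hcongr, hsub]
      linear_combination e1 - e2
    rw [hkey, abs_neg, abs_mul, abs_of_nonneg hρ]
    simp
  have hfin := gronwall hT₀ hB hu hρ hl (le_refl 0) hsmall hrel
  intro t ht
  have := hfin t ht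
  have h0 : |w t - w' t| ≤ 0 := by simpa using this
  have := abs_nonneg (w t - w' t)
  have : |w t - w' t| = 0 := le_antisymm h0 (abs_nonneg _)
  exact sub_eq_zero.mp (abs_eq_zero.mp this)

lemma sol_bound (hT₀ : 0 < T₀) (hB : IntegrableOn B (Ioc 0 T₀)) {ρ l : ℝ}
    (hρ : 0 ≤ ρ) (hl : 0 ≤ l)
    (hsmall : ρ * ∫ s in Ioc (0:ℝ) T₀, |B s| * Real.exp (-(l * s)) ≤ 1/2)
    {w : ℝ → ℝ} (h : IsVolterraSol T₀ B ρ w) :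
    ∀ t ∈ Icc (0:ℝ) T₀, |w t| ≤ 2 * Real.exp (l * T₀) := by
  have hrel : ∀ t ∈ Icc (0:ℝ) T₀, |w t|
      ≤ 1 + ρ * |∫ s in (0:ℝ)..t, B s * w (t - s)| := by
    intro t ht
    have e1 := sol_eq' h t ht
    have hwt : w t = 1 - ρ * ∫ s in (0:ℝ)..t, B s * w (t - s) := by linarith
    rw [hwt]
    calc |1 - ρ * ∫ s in (0:ℝ)..t, B s * w (t - s)|
        ≤ |1| + |ρ * ∫ s in (0:ℝ)..t, B s * w (t - s)| := abs_sub _ _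
      _ = 1 + ρ * |∫ s in (0:ℝ)..t, B s * w (t - s)| := by
          rw [abs_one, abs_mul, abs_of_nonneg hρ]
  have hfin := gronwall hT₀ hB h.1 hρ hl zero_le_one hsmall hrel
  intro t ht
  have := hfin t ht
  linarith

end

end VolterraAux

open VolterraAux

/-- Lemma A.2, first part: if `Aₙ → A_∞` in `L¹(0,T₀)`, then for each `ρ ≥ 0`
the Volterra equations with kernels `Aₙ`, `A_∞` have continuous solutions on `[0,T₀]`, unique
up to their values on `[0,T₀]`, and the solutions converge uniformly on `[0,T₀]`, uniformly
for `ρ` in compact subsets of `[0,∞)`. -/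
theorem volterra_stability (T₀ : ℝ) (hT₀ : 0 < T₀)
    (A : ℕ → ℝ → ℝ) (Ainf : ℝ → ℝ)
    (hA : ∀ n, IntegrableOn (A n) (Ioc 0 T₀))
    (hAinf : IntegrableOn Ainf (Ioc 0 T₀))
    (hconv : Tendsto (fun n => ∫ t in Ioc (0:ℝ) T₀, |A n t - Ainf t|) atTop (nhds 0)) :
    (∀ ρ : ℝ, 0 ≤ ρ → ∀ n : ℕ, ∃ w, IsVolterraSol T₀ (A n) ρ w) ∧
    (∀ ρ : ℝ, 0 ≤ ρ → ∃ w, IsVolterraSol T₀ Ainf ρ w) ∧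
    (∀ ρ : ℝ, 0 ≤ ρ → ∀ n : ℕ, ∀ w w',
      IsVolterraSol T₀ (A n) ρ w → IsVolterraSol T₀ (A n) ρ w' → EqOn w w' (Icc 0 T₀)) ∧
    (∀ ρ : ℝ, 0 ≤ ρ → ∀ w w',
      IsVolterraSol T₀ Ainf ρ w → IsVolterraSol T₀ Ainf ρ w' → EqOn w w' (Icc 0 T₀)) ∧
    (∀ R : ℝ, 0 < R → ∀ ε : ℝ, 0 < ε → ∃ N : ℕ, ∀ n ≥ N,
      ∀ ρ ∈ Icc (0:ℝ) R, ∀ wn winf, IsVolterraSol T₀ (A n) ρ wn →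
        IsVolterraSol T₀ Ainf ρ winf → ∀ t ∈ Icc (0:ℝ) T₀, |wn t - winf t| ≤ ε) := by
  refine ⟨fun ρ hρ n => exists_isVolterraSol hT₀ (hA n) hρ,
    fun ρ hρ => exists_isVolterraSol hT₀ hAinf hρ,
    fun ρ hρ n w w' h h' => unique_isVolterraSol hT₀ (hA n) hρ h h',
    fun ρ hρ w w' h h' => unique_isVolterraSol hT₀ hAinf hρ h h', ?_⟩
  intro R hR ε hε
  obtain ⟨l₁, hl₁, hs₁⟩ := exists_lambda hAinf R (1/2) (by norm_num)
  obtain ⟨l₂, hl₂, hs₂⟩ := exists_lambda hAinf R (1/4) (by norm_num)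
  set C : ℝ := 2 * Real.exp (l₁ * T₀) with hCdef
  have hC0 : 0 < C := by positivity
  set K : ℝ := 2 * (R * C) * Real.exp (l₂ * T₀) with hKdef
  have hK0 : 0 < K := by positivity
  set δ : ℝ := min (1 / (4 * R)) (ε / K) with hδdef
  have hδ0 : 0 < δ := lt_min (by positivity) (by positivity)
  have hev : ∀ᶠ n in atTop, (∫ t in Ioc (0:ℝ) T₀, |A n t - Ainf t|) < δ :=
    hconv.eventually (eventually_lt_nhds hδ0)
  rw [eventually_atTop] at hev
  obtain ⟨N, hN⟩ := hev
  refine ⟨N, fun n hn ρ hρ wn winf hwn hwinf => ?_⟩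
  have hρ0 : 0 ≤ ρ := hρ.1
  have hρR : ρ ≤ R := hρ.2
  set εn : ℝ := ∫ t in Ioc (0:ℝ) T₀, |A n t - Ainf t| with hεndef
  have hεn0 : 0 ≤ εn :=
    setIntegral_nonneg measurableSet_Ioc fun s _ => abs_nonneg _
  have hεnδ : εn < δ := hN n hn
  have hΔint : IntegrableOn (fun s => A n s - Ainf s) (Ioc 0 T₀) := (hA n).sub hAinf
  -- uniform bound for winf
  have hsinf : ρ * ∫ s in Ioc (0:ℝ) T₀, |Ainf s| * Real.exp (-(l₁ * s)) ≤ 1/2 :=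
    le_trans (mul_le_mul_of_nonneg_right hρR (expker_nonneg l₁)) hs₁
  have hCb : ∀ σ ∈ Icc (0:ℝ) T₀, |winf σ| ≤ C :=
    sol_bound hT₀ hAinf hρ0 hl₁ hsinf hwinf
  have hCb0 : ∀ σ ∈ Icc (0:ℝ) T₀, |winf σ| ≤ C * Real.exp (0 * σ) := by
    intro σ hσ
    simpa using hCb σ hσ
  -- smallness of the weighted `L¹` norm of `A n`
  have hsAn : ρ * ∫ s in Ioc (0:ℝ) T₀, |A n s| * Real.exp (-(l₂ * s)) ≤ 1/2 := by
    have hmono : (∫ s in Ioc (0:ℝ) T₀, |A n s| * Real.exp (-(l₂ * s)))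
        ≤ ∫ s in Ioc (0:ℝ) T₀, (|Ainf s| * Real.exp (-(l₂ * s)) + |A n s - Ainf s|) := by
      refine setIntegral_mono_on (expker_integrableOn (hA n) l₂ hl₂)
        ((expker_integrableOn hAinf l₂ hl₂).add hΔint.abs) measurableSet_Ioc
        (fun s hs => ?_)
      have h1 : |A n s| ≤ |Ainf s| + |A n s - Ainf s| := by
        have := abs_sub_abs_le_abs_sub (A n s) (Ainf s)
        linarith [abs_nonneg (A n s - Ainf s)]
      have h2 : Real.exp (-(l₂ * s)) ≤ 1 :=
        Real.exp_le_one_iff.2 (by nlinarith [hs.1, hl₂])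
      nlinarith [Real.exp_pos (-(l₂ * s)), abs_nonneg (A n s - Ainf s), abs_nonneg (Ainf s)]
    have hsplit : (∫ s in Ioc (0:ℝ) T₀, (|Ainf s| * Real.exp (-(l₂ * s)) + |A n s - Ainf s|))
        = (∫ s in Ioc (0:ℝ) T₀, |Ainf s| * Real.exp (-(l₂ * s))) + εn :=
      integral_add (expker_integrableOn hAinf l₂ hl₂) hΔint.abs
    have hRδ : R * δ ≤ 1/4 := by
      have := min_le_left (1 / (4 * R)) (ε / K)
      have hδle : δ ≤ 1 / (4 * R) := this
      calc R * δ ≤ R * (1 / (4 * R)) := mul_le_mul_of_nonneg_left hδle hR.le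
        _ = 1/4 := by field_simp
    calc ρ * ∫ s in Ioc (0:ℝ) T₀, |A n s| * Real.exp (-(l₂ * s))
        ≤ R * ∫ s in Ioc (0:ℝ) T₀, |A n s| * Real.exp (-(l₂ * s)) :=
          mul_le_mul_of_nonneg_right hρR (expker_nonneg l₂)
      _ ≤ R * ((∫ s in Ioc (0:ℝ) T₀, |Ainf s| * Real.exp (-(l₂ * s))) + εn) := by
          rw [← hsplit]
          exact mul_le_mul_of_nonneg_left hmono hR.le
      _ = R * (∫ s in Ioc (0:ℝ) T₀, |Ainf s| * Real.exp (-(l₂ * s))) + R * εn := by ring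
      _ ≤ 1/4 + 1/4 := by
          have h3 : R * εn ≤ R * δ := mul_le_mul_of_nonneg_left hεnδ.le hR.le
          have h4 : R * εn ≤ 1/4 := le_trans h3 hRδ
          linarith [hs₂]
      _ = 1/2 := by norm_num
  -- the Volterra relation satisfied by the difference
  set G : ℝ := R * (εn * C) with hGdef
  have hG0 : 0 ≤ G := by positivity
  have hu : ContinuousOn (fun t => wn t - winf t) (Icc 0 T₀) := hwn.1.sub hwinf.1
  have hrel : ∀ t ∈ Icc (0:ℝ) T₀, |wn t - winf t|
      ≤ G + ρ * |∫ s in (0:ℝ)..t, A n s * (wn (t - s) - winf (t - s))| := by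
    intro t ht
    have e1 := sol_eq' hwn t ht
    have e2 := sol_eq' hwinf t ht
    have hi1 := intervalIntegrable_ker_mul (hA n) hwn.1 ht
    have hi2 := intervalIntegrable_ker_mul hAinf hwinf.1 ht
    have hiu := intervalIntegrable_ker_mul (hA n) hu ht
    have hiw := intervalIntegrable_ker_mul hΔint hwinf.1 ht
    have hcomb : (∫ s in (0:ℝ)..t, A n s * (wn (t-s) - winf (t-s)))
        + (∫ s in (0:ℝ)..t, (A n s - Ainf s) * winf (t-s))
        = (∫ s in (0:ℝ)..t, A n s * wn (t-s)) - ∫ s in (0:ℝ)..t, Ainf s * winf (t-s) := by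
      rw [← intervalIntegral.integral_add hiu hiw, ← intervalIntegral.integral_sub hi1 hi2]
      exact intervalIntegral.integral_congr (fun s _ => by ring)
    have hkey : wn t - winf t
        = -(ρ * ∫ s in (0:ℝ)..t, A n s * (wn (t-s) - winf (t-s)))
          - ρ * ∫ s in (0:ℝ)..t, (A n s - Ainf s) * winf (t-s) := by
      linear_combination e1 - e2 + ρ * hcomb
    have hΔbd := conv_bound hΔint hwinf.1 ht (le_refl 0) hC0.le hCb0
    have hΔbd' : |∫ s in (0:ℝ)..t, (A n s - Ainf s) * winf (t-s)| ≤ εn * C := by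
      have hId : (∫ s in Ioc (0:ℝ) T₀, |A n s - Ainf s| * Real.exp (-(0 * s))) = εn := by
        rw [hεndef]
        congr 1 with s
        simp
      calc |∫ s in (0:ℝ)..t, (A n s - Ainf s) * winf (t-s)|
          ≤ (∫ s in Ioc (0:ℝ) T₀, |A n s - Ainf s| * Real.exp (-(0 * s)))
            * (C * Real.exp (0 * t)) := hΔbd
        _ = εn * C := by rw [hId]; simp
    calc |wn t - winf t|
        = |-(ρ * ∫ s in (0:ℝ)..t, A n s * (wn (t-s) - winf (t-s)))
            - ρ * ∫ s in (0:ℝ)..t, (A n s - Ainf s) * winf (t-s)| := by rw [hkey]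
      _ ≤ |-(ρ * ∫ s in (0:ℝ)..t, A n s * (wn (t-s) - winf (t-s)))|
            + |ρ * ∫ s in (0:ℝ)..t, (A n s - Ainf s) * winf (t-s)| := abs_sub _ _
      _ = ρ * |∫ s in (0:ℝ)..t, A n s * (wn (t-s) - winf (t-s))|
            + ρ * |∫ s in (0:ℝ)..t, (A n s - Ainf s) * winf (t-s)| := by
          rw [abs_neg, abs_mul, abs_mul, abs_of_nonneg hρ0]
      _ ≤ ρ * |∫ s in (0:ℝ)..t, A n s * (wn (t-s) - winf (t-s))| + ρ * (εn * C) := by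
          have := mul_le_mul_of_nonneg_left hΔbd' hρ0
          linarith
      _ ≤ G + ρ * |∫ s in (0:ℝ)..t, A n s * (wn (t-s) - winf (t-s))| := by
          have h5 : ρ * (εn * C) ≤ R * (εn * C) :=
            mul_le_mul_of_nonneg_right hρR (by positivity)
          rw [hGdef]
          linarith
  have hfin := gronwall hT₀ (hA n) hu hρ0 hl₂ hG0 hsAn hrel
  intro t ht
  have h6 := hfin t ht
  have h7 : 2 * G * Real.exp (l₂ * T₀) = K * εn := by rw [hGdef, hKdef]; ring
  have h8 : εn ≤ ε / K := le_trans hεnδ.le (min_le_right _ _)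
  have h9 : K * εn ≤ K * (ε / K) := mul_le_mul_of_nonneg_left h8 hK0.le
  have h10 : K * (ε / K) = ε := by field_simp
  calc |wn t - winf t| ≤ 2 * G * Real.exp (l₂ * T₀) := h6
    _ = K * εn := h7
    _ ≤ ε := by rw [← h10]; exact h9
end

section
/- For every λ ≥ 0, the function z : [0,∞) → ℝ defined by z(t) = 1/(1+λ) + (λ/(1+λ)) cos(√(1+λ) · t) satisfies z(0) = 1 and z'(t) + λ ∫₀ᵗ cos(t−σ) z(σ) dσ = 0 for all t ≥ 0. -/
open MeasureTheory intervalIntegral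

/-- for every `λ ≥ 0`, the function
`z(t) = 1/(1+λ) + (λ/(1+λ)) cos(√(1+λ) t)` satisfies `z(0)=1` and
`z'(t) + λ ∫₀ᵗ cos(t−σ) z(σ) dσ = 0` for all `t ≥ 0`. -/
theorem cosine_kernel_explicit_solution (lam : ℝ) (hlam : 0 ≤ lam) :
    let z : ℝ → ℝ := fun t =>
      1 / (1 + lam) + (lam / (1 + lam)) * Real.cos (Real.sqrt (1 + lam) * t)
    z 0 = 1 ∧ ∀ t : ℝ, 0 ≤ t →
      HasDerivAt z (-(lam * ∫ σ in (0:ℝ)..t, Real.cos (t - σ) * z σ)) t := by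
  intro z
  have hpos : (0:ℝ) < 1 + lam := by linarith
  have hne : (1:ℝ) + lam ≠ 0 := ne_of_gt hpos
  set ω : ℝ := Real.sqrt (1 + lam) with hωdef
  have hωsq : ω * ω = 1 + lam := Real.mul_self_sqrt hpos.le
  constructor
  · show 1 / (1 + lam) + (lam / (1 + lam)) * Real.cos (ω * 0) = 1
    rw [mul_zero, Real.cos_zero]
    field_simp
  · intro t ht
    -- the integral
    set F : ℝ → ℝ := fun σ => (1 / (1 + lam)) *
      (-(Real.sin (t - σ)) + Real.sin (t - σ) * Real.cos (ω * σ)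
        + ω * (Real.cos (t - σ) * Real.sin (ω * σ))) with hF
    have hderivF : ∀ σ : ℝ, HasDerivAt F (Real.cos (t - σ) * z σ) σ := by
      intro σ
      have hlin : HasDerivAt (fun σ : ℝ => t - σ) (-1) σ := by
        exact (hasDerivAt_id σ).const_sub t
      have hs : HasDerivAt (fun σ : ℝ => Real.sin (t - σ)) (-(Real.cos (t - σ))) σ := by
        exact ((Real.hasDerivAt_sin (t - σ)).comp σ hlin).congr_deriv (by ring)
      have hc : HasDerivAt (fun σ : ℝ => Real.cos (t - σ)) (Real.sin (t - σ)) σ := by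
        exact ((Real.hasDerivAt_cos (t - σ)).comp σ hlin).congr_deriv (by ring)
      have hωlin : HasDerivAt (fun σ : ℝ => ω * σ) ω σ := by
        simpa using (hasDerivAt_id σ).const_mul ω
      have hcw : HasDerivAt (fun σ : ℝ => Real.cos (ω * σ)) (-(Real.sin (ω * σ)) * ω) σ :=
        (Real.hasDerivAt_cos (ω * σ)).comp σ hωlin
      have hsw : HasDerivAt (fun σ : ℝ => Real.sin (ω * σ)) (Real.cos (ω * σ) * ω) σ :=
        (Real.hasDerivAt_sin (ω * σ)).comp σ hωlin
      have h1 := ((hs.neg.add (hs.mul hcw)).add ((hc.mul hsw).const_mul ω)).const_mul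
        (1 / (1 + lam))
      refine h1.congr_deriv (Eq.symm ?_)
      show Real.cos (t - σ) *
          (1 / (1 + lam) + (lam / (1 + lam)) * Real.cos (ω * σ)) = _
      field_simp
      simp only [mul_comm σ ω]
      linear_combination (-(Real.cos (t - σ) * Real.cos (ω * σ))) * hωsq
    have hcont : IntervalIntegrable (fun σ => Real.cos (t - σ) * z σ) volume 0 t := by
      apply Continuous.intervalIntegrable
      fun_prop
    have hint : (∫ σ in (0:ℝ)..t, Real.cos (t - σ) * z σ) = F t - F 0 :=
      integral_eq_sub_of_hasDerivAt (fun σ _ => hderivF σ) hcont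
    have hFt : F t = (1 / (1 + lam)) * (ω * Real.sin (ω * t)) := by
      simp [hF]
    have hF0 : F 0 = 0 := by
      simp [hF]
    -- derivative of z
    have hωlin : HasDerivAt (fun s : ℝ => ω * s) ω t := by
      simpa using (hasDerivAt_id t).const_mul ω
    have hz : HasDerivAt z ((lam / (1 + lam)) * (-(Real.sin (ω * t)) * ω)) t := by
      exact (((Real.hasDerivAt_cos (ω * t)).comp t hωlin).const_mul
        (lam / (1 + lam))).const_add (1 / (1 + lam))
    convert hz using 1
    rw [hint, hFt, hF0]
    ring
end
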